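/- arXiv:1305.3543 — 8 statements merged into one kernel-verified Lean document; each statement's English description precedes it below -/
import Mathlib

section
/- Let R be a commutative ring and let c : ℤ → R satisfy c_0 = 1 and c_r = 0 for all r < 0. Let m ≥ 1 and let α = (α_1,…,α_m) be a vector of integers. For a subset S of the set of pairs Δ_m := {(i,j) : 1 ≤ i < j ≤ m} and 1 ≤ k ≤ m, set α^S_k := α_k + #{j : (k,j) ∈ S} − #{i : (i,k) ∈ S}. Then ∑_{S ⊆ Δ_m} (−1)^{#S} ∏_{k=1}^m c_{α^S_k} = det( c_{α_i + j − i} )_{1 ≤ i,j ≤ m}. (This is the identity R^0 c_α = det(c_{α_i+j−i}), expressing the expansion of the raising operator product ∏_{i<j}(1 − R_{ij}) applied to c_α.) -/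
open Finset

section RaisingOperatorAux

variable {R : Type*} [CommRing R] {m : ℕ}

private noncomputable def Xs (R : Type*) [CommRing R] {m : ℕ} (β : Fin m → ℤ) :
    AddMonoidAlgebra R (Fin m → ℤ) :=
  AddMonoidAlgebra.single β 1

private lemma Xs_zero : Xs R (0 : Fin m → ℤ) = 1 := rfl

private lemma Xs_mul (β γ : Fin m → ℤ) : Xs R β * Xs R γ = Xs R (β + γ) := by
  simp [Xs, AddMonoidAlgebra.single_mul_single]

private lemma prod_Xs {ι : Type*} (s : Finset ι) (d : ι → Fin m → ℤ) :
    ∏ p ∈ s, Xs R (d p) = Xs R (∑ p ∈ s, d p) := by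
  simp [Xs, AddMonoidAlgebra.prod_single]

private lemma Xs_pow (β : Fin m → ℤ) (n : ℕ) : Xs R β ^ n = Xs R (n • β) := by
  simp [Xs, AddMonoidAlgebra.single_pow]

private noncomputable def phi (c : ℤ → R) (m : ℕ) :
    AddMonoidAlgebra R (Fin m → ℤ) →ₗ[R] R :=
  Finsupp.linearCombination R (fun β : Fin m → ℤ => ∏ k, c (β k)) ∘ₗ
    (AddMonoidAlgebra.coeffLinearEquiv R).toLinearMap

private lemma phi_single (c : ℤ → R) (β : Fin m → ℤ) (r : R) :
    phi c m (AddMonoidAlgebra.single β r) = r * ∏ k, c (β k) := by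
  exact (Finsupp.linearCombination_single (R := R)
    (v := fun β : Fin m → ℤ => ∏ k, c (β k)) r β).trans (smul_eq_mul ..)

private lemma prod_pairs {M : Type*} [CommMonoid M] (f : Fin m → Fin m → M) :
    ∏ p ∈ univ.filter (fun p : Fin m × Fin m => p.1 < p.2), f p.1 p.2 =
    ∏ i : Fin m, ∏ j ∈ Ioi i, f i j := by
  rw [Finset.prod_sigma']
  apply Finset.prod_nbij' (i := fun p : Fin m × Fin m => (⟨p.1, p.2⟩ : (_ : Fin m) × Fin m))
    (j := fun x : (_ : Fin m) × Fin m => (x.1, x.2)) <;>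
    simp [Finset.mem_sigma]

private def dd {m : ℕ} (p : Fin m × Fin m) : Fin m → ℤ :=
  Pi.single p.1 1 - Pi.single p.2 1

private lemma smul_Xs (u : ℤˣ) (β : Fin m → ℤ) :
    u • (Xs R β) = AddMonoidAlgebra.single β ((u : ℤ) : R) := by
  rw [Units.smul_def, Xs]
  rw [AddMonoidAlgebra.smul_single]
  simp

private lemma vandermonde_core (R : Type*) [CommRing R] (m : ℕ) :
    ∏ p ∈ univ.filter (fun p : Fin m × Fin m => p.1 < p.2), (1 - Xs R (dd p)) =
    ∑ σ : Equiv.Perm (Fin m),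
      AddMonoidAlgebra.single (fun k : Fin m => (σ k : ℤ) - (k : ℤ))
        ((Equiv.Perm.sign σ : ℤ) : R) := by
  classical
  set Δ := univ.filter (fun p : Fin m × Fin m => p.1 < p.2) with hΔ
  set γ : Fin m → ℤ := fun k => (k : ℤ) with hγ
  have hunit : Xs R γ * Xs R (-γ) = 1 := by rw [Xs_mul, add_neg_cancel, Xs_zero]
  have hγeq : ∑ p ∈ Δ, Pi.single p.2 (1 : ℤ) = γ := by
    funext k
    rw [Finset.sum_apply]
    have h1 : ∀ p : Fin m × Fin m,
        (Pi.single p.2 1 : Fin m → ℤ) k = if k = p.2 then 1 else 0 := by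
      intro p
      rw [Pi.single_apply]
    simp only [h1]
    rw [Finset.sum_boole]
    have h2 : Δ.filter (fun p : Fin m × Fin m => k = p.2) = Finset.Iio k ×ˢ {k} := by
      ext p
      simp only [hΔ, Finset.mem_filter, Finset.mem_univ, true_and, Finset.mem_product,
        Finset.mem_Iio, Finset.mem_singleton]
      constructor
      · rintro ⟨h, rfl⟩; exact ⟨h, rfl⟩
      · rintro ⟨h, rfl⟩; exact ⟨h, rfl⟩
    rw [h2, Finset.card_product, Finset.card_singleton, mul_one, Fin.card_Iio]
  have key : (∏ p ∈ Δ, (1 - Xs R (dd p))) * Xs R γ =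
      (∑ σ : Equiv.Perm (Fin m),
        AddMonoidAlgebra.single (fun k : Fin m => (σ k : ℤ) - (k : ℤ))
          ((Equiv.Perm.sign σ : ℤ) : R)) * Xs R γ := by
    have hexp : ∀ σ : Equiv.Perm (Fin m),
        ∑ i : Fin m, (i : ℕ) • Pi.single (σ i) (1 : ℤ) =
          fun k : Fin m => ((σ⁻¹ k : Fin m) : ℤ) := by
      intro σ
      funext k
      rw [Finset.sum_apply]
      rw [Finset.sum_eq_single (σ⁻¹ k)]
      · simp [Pi.single_apply]
      · intro i _ hi
        have : k ≠ σ i := by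
          intro h; exact hi (by simp [h])
        simp [Pi.single_apply, this]
      · simp
    calc (∏ p ∈ Δ, (1 - Xs R (dd p))) * Xs R γ
        = ∏ p ∈ Δ, ((1 - Xs R (dd p)) * Xs R (Pi.single p.2 1)) := by
          rw [← hγeq, ← prod_Xs, ← Finset.prod_mul_distrib]
      _ = ∏ p ∈ Δ, (Xs R (Pi.single p.2 1) - Xs R (Pi.single p.1 1)) := by
          refine Finset.prod_congr rfl fun p _ => ?_
          rw [sub_mul, one_mul, Xs_mul, dd, sub_add_cancel]
      _ = ∏ i : Fin m, ∏ j ∈ Ioi i,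
            (Xs R (Pi.single j 1) - Xs R (Pi.single i 1)) := by
          rw [hΔ]
          exact prod_pairs (f := fun i j : Fin m => Xs R (Pi.single j 1) - Xs R (Pi.single i 1))
      _ = Matrix.det (Matrix.vandermonde fun i => Xs R (Pi.single i 1)) :=
          (Matrix.det_vandermonde _).symm
      _ = ∑ σ : Equiv.Perm (Fin m),
            Equiv.Perm.sign σ • ∏ i : Fin m, Xs R (Pi.single (σ i) 1) ^ (i : ℕ) := by
          rw [Matrix.det_apply]
          simp [Matrix.vandermonde_apply]
      _ = ∑ σ : Equiv.Perm (Fin m),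
            Equiv.Perm.sign σ • Xs R (fun k : Fin m => ((σ⁻¹ k : Fin m) : ℤ)) := by
          refine Finset.sum_congr rfl fun σ _ => ?_
          congr 1
          simp only [Xs_pow]
          rw [prod_Xs, hexp σ]
      _ = ∑ σ : Equiv.Perm (Fin m),
            Equiv.Perm.sign σ • Xs R (fun k : Fin m => ((σ k : Fin m) : ℤ)) := by
          refine Fintype.sum_equiv (Equiv.inv (Equiv.Perm (Fin m))) _ _ fun σ => ?_
          simp [Equiv.Perm.sign_inv]
      _ = (∑ σ : Equiv.Perm (Fin m),
            AddMonoidAlgebra.single (fun k : Fin m => (σ k : ℤ) - (k : ℤ))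
              ((Equiv.Perm.sign σ : ℤ) : R)) * Xs R γ := by
          rw [Finset.sum_mul]
          refine Finset.sum_congr rfl fun σ _ => ?_
          rw [smul_Xs]
          show AddMonoidAlgebra.single _ _ =
            AddMonoidAlgebra.single (fun k : Fin m => (σ k : ℤ) - (k : ℤ)) _ *
              AddMonoidAlgebra.single γ 1
          rw [AddMonoidAlgebra.single_mul_single, mul_one]
          congr 1
          funext k
          simp [hγ]
  calc ∏ p ∈ Δ, (1 - Xs R (dd p))
      = (∏ p ∈ Δ, (1 - Xs R (dd p))) * (Xs R γ * Xs R (-γ)) := by rw [hunit, mul_one]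
    _ = _ := by rw [← mul_assoc, key, mul_assoc, hunit, mul_one]

private lemma neg_Xs (β : Fin m → ℤ) :
    -(Xs R β) = AddMonoidAlgebra.single β (-1 : R) := by
  rw [Xs]
  rw [AddMonoidAlgebra.single_neg]

private lemma neg_prod_Xs {ι : Type*} (S : Finset ι) (d : ι → Fin m → ℤ) :
    ∏ p ∈ S, (-(Xs R (d p))) =
      AddMonoidAlgebra.single (∑ p ∈ S, d p) ((-1 : R) ^ S.card) := by
  simp only [neg_Xs]
  rw [AddMonoidAlgebra.prod_single, Finset.prod_const]

private lemma hexpand (R : Type*) [CommRing R] (m : ℕ) :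
    (∏ p ∈ univ.filter (fun p : Fin m × Fin m => p.1 < p.2), (1 - Xs R (dd p))) =
    ∑ S ∈ (univ.filter (fun p : Fin m × Fin m => p.1 < p.2)).powerset,
      AddMonoidAlgebra.single (∑ p ∈ S, dd p) ((-1 : R) ^ S.card) := by
  have h : ∀ p ∈ univ.filter (fun p : Fin m × Fin m => p.1 < p.2),
      (1 - Xs R (dd p)) = (-(Xs R (dd p)) + 1) := fun p _ => by ring
  rw [Finset.prod_congr rfl h, Finset.prod_add]
  refine Finset.sum_congr rfl fun S hS => ?_
  rw [Finset.prod_const_one, mul_one, neg_prod_Xs]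

private lemma hdet (c : ℤ → R) (α : Fin m → ℤ) :
    Matrix.det (Matrix.of fun i j : Fin m => c (α i + (j : ℤ) - (i : ℤ))) =
    ∑ σ : Equiv.Perm (Fin m),
      ((Equiv.Perm.sign σ : ℤ) : R) * ∏ k : Fin m, c ((σ k : ℤ) - (k : ℤ) + α k) := by
  rw [Matrix.det_apply]
  refine Fintype.sum_equiv (Equiv.inv (Equiv.Perm (Fin m))) _ _ fun σ => ?_
  simp only [Equiv.inv_apply]
  rw [Units.smul_def, zsmul_eq_mul, Equiv.Perm.sign_inv]
  have hp : ∏ i : Fin m,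
      (Matrix.of fun i j : Fin m => c (α i + (j : ℤ) - (i : ℤ))) (σ i) i =
      ∏ k : Fin m, c (((σ⁻¹ k : Fin m) : ℤ) - (k : ℤ) + α k) := by
    rw [← Equiv.prod_comp σ (fun i : Fin m => c (((σ⁻¹ i : Fin m) : ℤ) - (i : ℤ) + α i))]
    refine Finset.prod_congr rfl fun i _ => ?_
    simp only [Matrix.of_apply, Equiv.Perm.inv_def, Equiv.symm_apply_apply]
    congr 1
    ring
  rw [hp]

end RaisingOperatorAux

/-- For a commutative ring `R` and `c : ℤ → R` with `c 0 = 1` and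
`c r = 0` for `r < 0`, the expansion of the raising operator product
`∏_{i<j} (1 - R_{ij})` applied to `c_α` equals the determinant
`det(c_{α_i + j - i})`. -/
theorem raising_operator_determinant (R : Type*) [CommRing R]
    (c : ℤ → R) (hc0 : c 0 = 1) (hcneg : ∀ r : ℤ, r < 0 → c r = 0)
    (m : ℕ) (hm : 1 ≤ m) (α : Fin m → ℤ) :
    ∑ S ∈ (Finset.univ.filter (fun p : Fin m × Fin m => p.1 < p.2)).powerset,
      (-1 : R) ^ S.card *
        ∏ k : Fin m,
          c (α k + ((S.filter (fun p => p.1 = k)).card : ℤ)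
              - ((S.filter (fun p => p.2 = k)).card : ℤ)) =
    Matrix.det (Matrix.of fun i j : Fin m => c (α i + (j : ℤ) - (i : ℤ))) := by
  classical
  have hexpo : ∀ (S : Finset (Fin m × Fin m)) (k : Fin m),
      ((∑ p ∈ S, dd p) + α) k =
      α k + ((S.filter (fun p => p.1 = k)).card : ℤ) -
        ((S.filter (fun p => p.2 = k)).card : ℤ) := by
    intro S k
    rw [Pi.add_apply, Finset.sum_apply]
    have h1 : ∀ p : Fin m × Fin m,
        dd p k = (if p.1 = k then (1 : ℤ) else 0) - (if p.2 = k then 1 else 0) := by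
      intro p
      rw [dd, Pi.sub_apply, Pi.single_apply, Pi.single_apply]
      simp [eq_comm]
    simp only [h1]
    rw [Finset.sum_sub_distrib, Finset.sum_boole, Finset.sum_boole]
    ring
  calc ∑ S ∈ (Finset.univ.filter (fun p : Fin m × Fin m => p.1 < p.2)).powerset,
      (-1 : R) ^ S.card *
        ∏ k : Fin m,
          c (α k + ((S.filter (fun p => p.1 = k)).card : ℤ)
              - ((S.filter (fun p => p.2 = k)).card : ℤ))
      = ∑ S ∈ (Finset.univ.filter (fun p : Fin m × Fin m => p.1 < p.2)).powerset,
          phi c m (AddMonoidAlgebra.single ((∑ p ∈ S, dd p) + α) ((-1 : R) ^ S.card)) := by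
        refine Finset.sum_congr rfl fun S hS => ?_
        rw [phi_single]
        congr 1
        refine Finset.prod_congr rfl fun k _ => ?_
        rw [hexpo S k]
    _ = phi c m (∑ S ∈ (Finset.univ.filter (fun p : Fin m × Fin m => p.1 < p.2)).powerset,
          AddMonoidAlgebra.single ((∑ p ∈ S, dd p) + α) ((-1 : R) ^ S.card)) :=
        (map_sum _ _ _).symm
    _ = phi c m ((∏ p ∈ Finset.univ.filter (fun p : Fin m × Fin m => p.1 < p.2),
          (1 - Xs R (dd p))) * Xs R α) := by
        congr 1
        rw [hexpand, Finset.sum_mul]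
        refine Finset.sum_congr rfl fun S _ => ?_
        rw [Xs, AddMonoidAlgebra.single_mul_single, mul_one]
    _ = phi c m ((∑ σ : Equiv.Perm (Fin m),
          AddMonoidAlgebra.single (fun k : Fin m => (σ k : ℤ) - (k : ℤ))
            ((Equiv.Perm.sign σ : ℤ) : R)) * Xs R α) := by
        rw [vandermonde_core]
    _ = ∑ σ : Equiv.Perm (Fin m),
          ((Equiv.Perm.sign σ : ℤ) : R) * ∏ k : Fin m, c ((σ k : ℤ) - (k : ℤ) + α k) := by
        rw [Finset.sum_mul, map_sum]
        refine Finset.sum_congr rfl fun σ _ => ?_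
        rw [Xs, AddMonoidAlgebra.single_mul_single, mul_one, phi_single]
        congr 1
    _ = Matrix.det (Matrix.of fun i j : Fin m => c (α i + (j : ℤ) - (i : ℤ))) :=
        (hdet c α).symm
end

section
/- Fix integers n ≥ 1 and 0 ≤ k ≤ n−1 and set m := n−k. For a k-strict partition λ = (λ_1,…,λ_m) (zero parts allowed) with λ_1 ≤ n+k, define p_j(λ) := n + k + j − λ_j − #{i < j : λ_i + λ_j > 2k + j − i} for 1 ≤ j ≤ m. Then p_1(λ) < p_2(λ) < ⋯ < p_m(λ), each p_j(λ) lies in {1,…,2n}, and the map λ ↦ {p_1(λ),…,p_m(λ)} is a bijection from the set of k-strict partitions with at most m parts and largest part at most n+k onto the set of index sets, i.e. m-element subsets P ⊆ {1,…,2n} such that i + j ≠ 2n + 1 for all i, j ∈ P. -/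
open Finset

/-- A `k`-strict partition with at most `m` parts and all parts at most
`n + k`: weakly decreasing, no part strictly greater than `k` is repeated. -/
def IsKStrictInRect (n k m : ℕ) (lam : Fin m → ℕ) : Prop :=
  Antitone lam ∧ (∀ i j : Fin m, i ≠ j → k < lam i → lam i ≠ lam j) ∧
    ∀ i, lam i ≤ n + k

/-- The index function `p_j(λ) = n + k + j − λ_j − #{i < j : λ_i + λ_j > 2k + j − i}`
(with `j` one-based, here `j : Fin m` zero-based). -/
def indexFun (n k m : ℕ) (lam : Fin m → ℕ) (j : Fin m) : ℤ :=
  (n : ℤ) + (k : ℤ) + ((j : ℕ) + 1 : ℕ) - (lam j : ℤ) -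
    ((Finset.univ.filter
        (fun i : Fin m => i < j ∧ 2 * k + ((j : ℕ) - (i : ℕ)) < lam i + lam j)).card : ℤ)

/-- An index set: an `m`-element subset `P ⊆ {1,…,2n}` with `i + j ≠ 2n + 1`
for all `i, j ∈ P`. -/
def IsIndexSet (n m : ℕ) (P : Finset ℤ) : Prop :=
  P.card = m ∧ (∀ x ∈ P, 1 ≤ x ∧ x ≤ 2 * (n : ℤ)) ∧
    ∀ x ∈ P, ∀ y ∈ P, x + y ≠ 2 * (n : ℤ) + 1

namespace KSAux

variable {n k m : ℕ}



lemma gap_of_consec {f : Fin m → ℤ}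
    (h : ∀ u : Fin m, ∀ hu : (u : ℕ) + 1 < m, f u + 1 ≤ f ⟨(u : ℕ) + 1, hu⟩) :
    ∀ i j : Fin m, i ≤ j → f i + (((j : ℕ) : ℤ) - ((i : ℕ) : ℤ)) ≤ f j := by
  have key : ∀ d : ℕ, ∀ i j : Fin m, (j : ℕ) = (i : ℕ) + d → f i + d ≤ f j := by
    intro d
    induction d with
    | zero => intro i j hj; have : i = j := Fin.ext (by omega); subst this; simp
    | succ d ih =>
        intro i j hj
        have hu : (i : ℕ) + 1 < m := by have := j.isLt; omega
        have h1 := h i hu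
        have h2 := ih ⟨(i : ℕ) + 1, hu⟩ j (by simp; omega)
        push_cast at h2 ⊢
        omega
  intro i j hij
  have hle : (i : ℕ) ≤ (j : ℕ) := hij
  have := key ((j : ℕ) - (i : ℕ)) i j (by omega)
  have hc : (((j : ℕ) - (i : ℕ) : ℕ) : ℤ) = ((j : ℕ) : ℤ) - ((i : ℕ) : ℤ) := by omega
  omega

lemma strictMono_of_consec {f : Fin m → ℤ}
    (h : ∀ u : Fin m, ∀ hu : (u : ℕ) + 1 < m, f u + 1 ≤ f ⟨(u : ℕ) + 1, hu⟩) :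
    StrictMono f := by
  intro i j hij
  have := gap_of_consec h i j hij.le
  have : ((i : ℕ) : ℤ) < ((j : ℕ) : ℤ) := by exact_mod_cast (Fin.lt_def.mp hij)
  omega

lemma antitone_of_consec {f : Fin m → ℤ}
    (h : ∀ u : Fin m, ∀ hu : (u : ℕ) + 1 < m, f ⟨(u : ℕ) + 1, hu⟩ ≤ f u) :
    Antitone f := by
  have key : ∀ d : ℕ, ∀ i j : Fin m, (j : ℕ) = (i : ℕ) + d → f j ≤ f i := by
    intro d
    induction d with
    | zero => intro i j hj; have : i = j := Fin.ext (by omega); subst this; simp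
    | succ d ih =>
        intro i j hj
        have hu : (i : ℕ) + 1 < m := by have := j.isLt; omega
        exact (ih ⟨(i : ℕ) + 1, hu⟩ j (by simp; omega)).trans (h i hu)
  intro i j hij
  exact key ((j : ℕ) - (i : ℕ)) i j (by have : (i:ℕ) ≤ j := hij; omega)

lemma card_filter_val_lt (m t : ℕ) :
    ((univ : Finset (Fin m)).filter (fun i : Fin m => (i : ℕ) < t)).card = min t m := by
  have himg : ((univ : Finset (Fin m)).filter (fun i : Fin m => (i : ℕ) < t)).image Fin.val
      = Finset.range (min t m) := by
    ext x
    simp only [mem_image, mem_filter, mem_univ, true_and, mem_range, lt_min_iff]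
    constructor
    · rintro ⟨i, hi, rfl⟩; exact ⟨hi, i.isLt⟩
    · rintro ⟨h1, h2⟩; exact ⟨⟨x, h2⟩, h1, rfl⟩
  have := Finset.card_image_of_injective
    ((univ : Finset (Fin m)).filter (fun i : Fin m => (i : ℕ) < t)) Fin.val_injective
  rw [himg, Finset.card_range] at this
  omega



def cset (n k m : ℕ) (lam : Fin m → ℕ) (j : Fin m) : Finset (Fin m) :=
  Finset.univ.filter
    (fun i : Fin m => i < j ∧ 2 * k + ((j : ℕ) - (i : ℕ)) < lam i + lam j)

lemma indexFun_eq (lam : Fin m → ℕ) (j : Fin m) :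
    indexFun n k m lam j =
      (n : ℤ) + (k : ℤ) + ((j : ℕ) : ℤ) + 1 - (lam j : ℤ) - ((cset n k m lam j).card : ℤ) := by
  unfold indexFun cset
  push_cast
  ring

lemma mem_cset {lam : Fin m → ℕ} {j h : Fin m} :
    h ∈ cset n k m lam j ↔ (h : ℕ) < (j : ℕ) ∧ 2 * k + ((j : ℕ) - (h : ℕ)) < lam h + lam j := by
  unfold cset
  rw [Finset.mem_filter, Fin.lt_def]
  simp

lemma prefix_strict {lam : Fin m → ℕ} (hks : IsKStrictInRect n k m lam) :
    ∀ i j : Fin m, i ≤ j → k < lam j → lam j + ((j : ℕ) - (i : ℕ)) ≤ lam i := by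
  have key : ∀ d : ℕ, ∀ i j : Fin m, (j : ℕ) = (i : ℕ) + d → k < lam j → lam j + d ≤ lam i := by
    intro d
    induction d with
    | zero => intro i j hj _; have : i = j := Fin.ext (by omega); subst this; omega
    | succ d ih =>
        intro i j hj hkj
        have hu : (i : ℕ) + 1 < m := by have := j.isLt; omega
        obtain ⟨i', hi'⟩ : ∃ i' : Fin m, i' = ⟨(i : ℕ) + 1, hu⟩ := ⟨_, rfl⟩
        have hval : (i' : ℕ) = (i : ℕ) + 1 := by rw [hi']
        have h1 : lam j + d ≤ lam i' := ih i' j (by omega) hkj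
        have h2 : lam i' ≤ lam i := hks.1 (by rw [Fin.le_def]; omega)
        have h3 : lam i ≠ lam i' := hks.2.1 i i' (by rw [Fin.ne_iff_vne]; omega) (by omega)
        omega
  intro i j hij hkj
  have : (i : ℕ) ≤ (j : ℕ) := hij
  have := key ((j : ℕ) - (i : ℕ)) i j (by omega) hkj
  omega

lemma cset_le (lam : Fin m → ℕ) (j : Fin m) : (cset n k m lam j).card ≤ (j : ℕ) := by
  have hsub : cset n k m lam j ⊆ (univ.filter (fun i : Fin m => (i : ℕ) < (j : ℕ))) := by
    intro h hh
    rw [mem_cset] at hh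
    simp only [mem_filter, mem_univ, true_and]
    exact hh.1
  have := Finset.card_le_card hsub
  rw [card_filter_val_lt] at this
  omega

lemma star1 {lam : Fin m → ℕ} (hks : IsKStrictInRect n k m lam) {i j : Fin m} (hij : i < j)
    (hcond : 2 * k + ((j : ℕ) - (i : ℕ)) < lam i + lam j) :
    indexFun n k m lam i + indexFun n k m lam j ≤ 2 * (n : ℤ) := by
  have hvij : (i : ℕ) < (j : ℕ) := hij
  have hba : lam j ≤ lam i := hks.1 hij.le
  have hai : k < lam i := by omega
  have hci : (i : ℕ) ≤ (cset n k m lam i).card := by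
    have hsub : (univ.filter (fun h : Fin m => (h : ℕ) < (i : ℕ))) ⊆ cset n k m lam i := by
      intro h hh
      simp only [mem_filter, mem_univ, true_and] at hh
      rw [mem_cset]
      have := prefix_strict hks h i (by exact_mod_cast hh.le) hai
      constructor
      · exact hh
      · omega
    have := Finset.card_le_card hsub
    rw [card_filter_val_lt] at this
    have := i.isLt
    omega
  have hcj : (i : ℕ) + 1 ≤ (cset n k m lam j).card := by
    have hsub : (univ.filter (fun h : Fin m => (h : ℕ) < (i : ℕ) + 1)) ⊆ cset n k m lam j := by
      intro h hh
      simp only [mem_filter, mem_univ, true_and] at hh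
      rw [mem_cset]
      have hhi : (h : ℕ) ≤ (i : ℕ) := by omega
      have := prefix_strict hks h i hhi hai
      constructor
      · omega
      · omega
    have := Finset.card_le_card hsub
    rw [card_filter_val_lt] at this
    have := j.isLt
    omega
  rw [indexFun_eq, indexFun_eq]
  omega

lemma star2 {lam : Fin m → ℕ} (hks : IsKStrictInRect n k m lam) {i j : Fin m} (hij : i < j)
    (hcond : lam i + lam j ≤ 2 * k + ((j : ℕ) - (i : ℕ))) :
    2 * (n : ℤ) + 2 ≤ indexFun n k m lam i + indexFun n k m lam j := by
  have hvij : (i : ℕ) < (j : ℕ) := hij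
  have hci := cset_le (n := n) (k := k) lam i
  rcases le_or_gt (lam i + lam j) (2 * k) with hab | hab
  · have hcj := cset_le (n := n) (k := k) lam j
    rw [indexFun_eq, indexFun_eq]
    omega
  · have hba : lam j ≤ lam i := hks.1 hij.le
    have hbk : lam j ≤ k := by
      by_contra hc
      push_neg at hc
      have := prefix_strict hks i j hij.le hc
      omega
    set s0 : ℕ := (j : ℕ) + 2 * k - (lam i + lam j) with hs0
    have hs0i : (i : ℕ) ≤ s0 := by omega
    have hs0m : s0 < m := by have := j.isLt; omega
    have hsub : cset n k m lam j ⊆ (univ.filter (fun h : Fin m => (h : ℕ) < s0)) := by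
      intro h hh
      rw [mem_cset] at hh
      simp only [mem_filter, mem_univ, true_and]
      by_contra hc
      push_neg at hc
      rcases le_or_gt (lam h) k with hlk | hlk
      · omega
      · have h1 := prefix_strict hks ⟨s0, hs0m⟩ h (by simp [Fin.le_def]; omega) hlk
        have h2 : lam ⟨s0, hs0m⟩ ≤ lam i := hks.1 (by simp [Fin.le_def]; omega)
        simp at h1
        omega
    have hcj : (cset n k m lam j).card ≤ s0 := by
      have := Finset.card_le_card hsub
      rw [card_filter_val_lt] at this
      omega
    rw [indexFun_eq, indexFun_eq]
    omega

lemma indexFun_strictMono {lam : Fin m → ℕ} (hks : IsKStrictInRect n k m lam) :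
    StrictMono (indexFun n k m lam) := by
  apply strictMono_of_consec
  intro u hu
  obtain ⟨v, hveq⟩ : ∃ v : Fin m, v = ⟨(u : ℕ) + 1, hu⟩ := ⟨_, rfl⟩
  rw [← hveq]
  have hval : (v : ℕ) = (u : ℕ) + 1 := by rw [hveq]
  have hvu : lam v ≤ lam u := hks.1 (by rw [Fin.le_def]; omega)
  have hsub : ∀ h ∈ cset n k m lam v, h ≠ u → h ∈ cset n k m lam u := by
    intro h hh hne
    rw [mem_cset] at hh ⊢
    have hne' : (h : ℕ) ≠ (u : ℕ) := fun hc => hne (Fin.ext hc)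
    omega
  rcases le_or_gt (lam u + lam v) (2 * k + 1) with hab | hab
  · have hsub2 : cset n k m lam v ⊆ cset n k m lam u := by
      intro h hh
      rcases eq_or_ne h u with rfl | hne
      · exfalso
        rw [mem_cset] at hh
        omega
      · exact hsub h hh hne
    have hcc := Finset.card_le_card hsub2
    rw [indexFun_eq, indexFun_eq]
    omega
  · have hku : k < lam u := by omega
    have hne : lam u ≠ lam v := hks.2.1 u v (by rw [Fin.ne_iff_vne]; omega) hku
    have hsub2 : cset n k m lam v ⊆ insert u (cset n k m lam u) := by
      intro h hh
      rcases eq_or_ne h u with rfl | hne'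
      · exact mem_insert_self _ _
      · exact mem_insert_of_mem (hsub h hh hne')
    have hcc := (Finset.card_le_card hsub2).trans (Finset.card_insert_le _ _)
    have hlt : lam v + 1 ≤ lam u := by
      rcases lt_or_eq_of_le hvu with h | h
      · omega
      · exact absurd h.symm hne
    rw [indexFun_eq, indexFun_eq]
    omega

lemma indexFun_bounds {lam : Fin m → ℕ} (hks : IsKStrictInRect n k m lam)
    (hmn : k + m ≤ n) (j : Fin m) :
    1 ≤ indexFun n k m lam j ∧ indexFun n k m lam j ≤ 2 * (n : ℤ) := by
  have hcj := cset_le (n := n) (k := k) lam j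
  have hlj := hks.2.2 j
  have hjm := j.isLt
  rw [indexFun_eq]
  omega


def ebset (n : ℕ) (p : Fin m → ℤ) (j : Fin m) : Finset (Fin m) :=
  univ.filter (fun i : Fin m => i < j ∧ p i + p j ≤ 2 * (n : ℤ))

def cbset (n : ℕ) (p : Fin m → ℤ) (j : Fin m) : Finset (Fin m) :=
  univ.filter (fun i : Fin m => i < j ∧ 2 * (n : ℤ) < p i + p j)

def lamZ (n k : ℕ) (p : Fin m → ℤ) (j : Fin m) : ℤ :=
  (n : ℤ) + k + (j : ℕ) + 1 - p j - ((ebset n p j).card : ℤ)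

lemma mem_ebset {p : Fin m → ℤ} {j h : Fin m} :
    h ∈ ebset n p j ↔ (h : ℕ) < (j : ℕ) ∧ p h + p j ≤ 2 * (n : ℤ) := by
  unfold ebset
  rw [Finset.mem_filter, Fin.lt_def]
  simp

lemma mem_cbset {p : Fin m → ℤ} {j h : Fin m} :
    h ∈ cbset n p j ↔ (h : ℕ) < (j : ℕ) ∧ 2 * (n : ℤ) < p h + p j := by
  unfold cbset
  rw [Finset.mem_filter, Fin.lt_def]
  simp

lemma eb_cb_count (p : Fin m → ℤ) (j : Fin m) :
    (ebset n p j).card + (cbset n p j).card = (j : ℕ) := by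
  have h1 : ebset n p j = (univ.filter (fun i : Fin m => i < j)).filter
      (fun i : Fin m => p i + p j ≤ 2 * (n : ℤ)) := by
    rw [Finset.filter_filter]; rfl
  have h2 : cbset n p j = (univ.filter (fun i : Fin m => i < j)).filter
      (fun i : Fin m => ¬ (p i + p j ≤ 2 * (n : ℤ))) := by
    rw [Finset.filter_filter]
    unfold cbset
    apply Finset.filter_congr
    intro x _
    simp [not_le]
  have h3 := Finset.card_filter_add_card_filter_not
    (s := univ.filter (fun i : Fin m => i < j))
    (p := fun i : Fin m => p i + p j ≤ 2 * (n : ℤ))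
  have h4 : (univ.filter (fun i : Fin m => i < j)).card = (j : ℕ) := by
    have : (univ.filter (fun i : Fin m => i < j)) =
        (univ.filter (fun i : Fin m => (i : ℕ) < (j : ℕ))) := by
      apply Finset.filter_congr; intro x _; rw [Fin.lt_def]
    rw [this, card_filter_val_lt]
    have := j.isLt; omega
  rw [h1, h2, ← h4, h3]

section Pside

variable {p : Fin m → ℤ}

lemma pgap (hsm : StrictMono p) {i j : Fin m} (hij : i ≤ j) :
    p i + (((j : ℕ) : ℤ) - ((i : ℕ) : ℤ)) ≤ p j := by
  apply gap_of_consec (fun u hu => ?_) i j hij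
  have : u < (⟨(u : ℕ) + 1, hu⟩ : Fin m) := by rw [Fin.lt_def]; simp
  have := hsm this
  omega

lemma P1 (hsm : StrictMono p) {i j : Fin m} (hij : i < j)
    (hple : p i + p j ≤ 2 * (n : ℤ)) :
    2 * (k : ℤ) + (((j : ℕ) : ℤ) - ((i : ℕ) : ℤ)) < lamZ n k p i + lamZ n k p j := by
  have hvij : (i : ℕ) < (j : ℕ) := hij
  have hebi : (ebset n p i).card ≤ (i : ℕ) := by
    have := eb_cb_count (n := n) p i; omega
  have hebj : (ebset n p j).card ≤ (i : ℕ) + (2 * (n : ℤ) - p i - p j).toNat + 1 := by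
    have hsub : ebset n p j ⊆ univ.filter
        (fun h : Fin m => (h : ℕ) < (i : ℕ) + (2 * (n : ℤ) - p i - p j).toNat + 1) := by
      intro h hh
      rw [mem_ebset] at hh
      simp only [mem_filter, mem_univ, true_and]
      by_contra hc
      push_neg at hc
      have hih : i ≤ h := by rw [Fin.le_def]; omega
      have := pgap hsm hih
      omega
    have := Finset.card_le_card hsub
    rw [card_filter_val_lt] at this
    omega
  unfold lamZ
  omega

lemma cb_le_half (hsm : StrictMono p) (hav : ∀ i j : Fin m, p i + p j ≠ 2 * (n : ℤ) + 1)
    (j : Fin m) : ((cbset n p j).card : ℤ) ≤ max 0 (p j - n - 1) := by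
  have hle := Finset.card_le_card_of_injOn (s := cbset n p j)
    (t := Finset.Icc (2 * (n : ℤ) + 2 - p j) (n : ℤ))
    (fun h : Fin m => min (p h) (2 * (n : ℤ) + 1 - p h)) ?_ ?_
  · rw [Int.card_Icc] at hle
    omega
  · intro h hh
    rw [Finset.mem_coe, mem_cbset] at hh
    have hav1 := hav h j
    have hlt : p h < p j := hsm (by rw [Fin.lt_def]; exact hh.1)
    beta_reduce
    rw [Finset.mem_coe, Finset.mem_Icc]
    rcases min_cases (p h) (2 * (n : ℤ) + 1 - p h) with ⟨e, he⟩ | ⟨e, he⟩ <;> rw [e] <;> omega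
  · intro h1 hh1 h2 hh2 heq
    rw [Finset.mem_coe, mem_cbset] at hh1 hh2
    beta_reduce at heq
    have : p h1 = p h2 ∨ p h1 + p h2 = 2 * (n : ℤ) + 1 := by
      rcases min_cases (p h1) (2 * (n : ℤ) + 1 - p h1) with ⟨e1, he1⟩ | ⟨e1, he1⟩ <;>
        rcases min_cases (p h2) (2 * (n : ℤ) + 1 - p h2) with ⟨e2, he2⟩ | ⟨e2, he2⟩ <;>
          rw [e1, e2] at heq <;> omega
    rcases this with h | h
    · exact hsm.injective h
    · exact absurd h (hav h1 h2)

lemma cb_le_split (hsm : StrictMono p) (hav : ∀ i j : Fin m, p i + p j ≠ 2 * (n : ℤ) + 1)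
    {i j : Fin m} (hij : i < j) :
    ((cbset n p j).card : ℤ) ≤ max 0 (p i + p j - 2 * (n : ℤ) - 1) + ((j : ℕ) - (i : ℕ) - 1 : ℕ) := by
  have hvij : (i : ℕ) < (j : ℕ) := hij
  have hsplit := Finset.card_filter_add_card_filter_not
    (s := cbset n p j) (p := fun h : Fin m => (h : ℕ) ≤ (i : ℕ))
  have hc1 : (((cbset n p j).filter (fun h : Fin m => (h : ℕ) ≤ (i : ℕ))).card : ℤ)
      ≤ max 0 (p i + p j - 2 * (n : ℤ) - 1) := by
    have hle := Finset.card_le_card_of_injOn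
      (s := (cbset n p j).filter (fun h : Fin m => (h : ℕ) ≤ (i : ℕ)))
      (t := Finset.Icc (2 * (n : ℤ) + 2 - p j) (p i)) (fun h : Fin m => p h) ?_ ?_
    · rw [Int.card_Icc] at hle
      omega
    · intro h hh
      rw [Finset.mem_coe, Finset.mem_filter, mem_cbset] at hh
      have hav1 := hav h j
      have hle' : p h ≤ p i := hsm.monotone (by rw [Fin.le_def]; exact hh.2)
      beta_reduce
      rw [Finset.mem_coe, Finset.mem_Icc]
      omega
    · intro h1 _ h2 _ heq
      exact hsm.injective heq
  have hc2 : ((cbset n p j).filter (fun h : Fin m => ¬ ((h : ℕ) ≤ (i : ℕ)))).card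
      ≤ (j : ℕ) - (i : ℕ) - 1 := by
    have hle := Finset.card_le_card_of_injOn
      (s := (cbset n p j).filter (fun h : Fin m => ¬ ((h : ℕ) ≤ (i : ℕ))))
      (t := Finset.Ico ((i : ℕ) + 1) (j : ℕ)) (fun h : Fin m => (h : ℕ)) ?_ ?_
    · rw [Nat.card_Ico] at hle
      omega
    · intro h hh
      rw [Finset.mem_coe, Finset.mem_filter, mem_cbset] at hh
      beta_reduce
      rw [Finset.mem_coe, Finset.mem_Ico]
      omega
    · intro h1 _ h2 _ heq
      exact Fin.ext heq
  omega

lemma P2 (hsm : StrictMono p) (hav : ∀ i j : Fin m, p i + p j ≠ 2 * (n : ℤ) + 1)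
    {i j : Fin m} (hij : i < j) (hpge : 2 * (n : ℤ) + 2 ≤ p i + p j) :
    lamZ n k p i + lamZ n k p j ≤ 2 * (k : ℤ) + (((j : ℕ) : ℤ) - ((i : ℕ) : ℤ)) := by
  have hvij : (i : ℕ) < (j : ℕ) := hij
  have hpij : p i < p j := hsm hij
  have h1 := eb_cb_count (n := n) p i
  have h2 := eb_cb_count (n := n) p j
  have h3 := cb_le_half (n := n) hsm hav i
  have h4 := cb_le_half (n := n) hsm hav j
  have h5 := cb_le_split (n := n) hsm hav hij
  unfold lamZ
  omega


variable {p : Fin m → ℤ}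

lemma eb_consec_a (hav : ∀ i j : Fin m, p i + p j ≠ 2 * (n : ℤ) + 1)
    (hsm : StrictMono p) (u : Fin m) (hu : (u : ℕ) + 1 < m) :
    ∀ hL : True,
    ((ebset n p u).card : ℤ) ≤ ((ebset n p (⟨(u : ℕ) + 1, hu⟩ : Fin m)).card : ℤ)
      + max 0 (p ⟨(u : ℕ) + 1, hu⟩ - p u - 1)
      - (if p u + p ⟨(u : ℕ) + 1, hu⟩ ≤ 2 * (n : ℤ) then 1 else 0) := by
  intro _
  obtain ⟨v, hveq⟩ : ∃ v : Fin m, v = ⟨(u : ℕ) + 1, hu⟩ := ⟨_, rfl⟩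
  rw [← hveq]
  have hval : (v : ℕ) = (u : ℕ) + 1 := by rw [hveq]
  set L : Finset (Fin m) := univ.filter
    (fun h : Fin m => h < u ∧ p h + p u ≤ 2 * (n : ℤ) ∧ 2 * (n : ℤ) < p h + p v) with hLdef
  have memL : ∀ h : Fin m, h ∈ L ↔
      h < u ∧ p h + p u ≤ 2 * (n : ℤ) ∧ 2 * (n : ℤ) < p h + p v := by
    intro h; rw [hLdef, Finset.mem_filter]; simp
  have hLcard : (L.card : ℤ) ≤ max 0 (p v - p u - 1) := by
    have hle := Finset.card_le_card_of_injOn (s := L)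
      (t := Finset.Icc (2 * (n : ℤ) + 2 - p v) (2 * (n : ℤ) - p u))
      (fun h : Fin m => p h) ?_ ?_
    · rw [Int.card_Icc] at hle
      omega
    · intro h hh
      rw [Finset.mem_coe, memL] at hh
      have hav1 := hav h v
      beta_reduce
      rw [Finset.mem_coe, Finset.mem_Icc]
      omega
    · intro h1 _ h2 _ heq
      exact hsm.injective heq
  have hsub : ebset n p u ⊆ ((ebset n p v).erase u) ∪ L := by
    intro h hh
    rw [mem_ebset] at hh
    rcases le_or_gt (p h + p v) (2 * (n : ℤ)) with hc | hc
    · apply Finset.mem_union_left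
      apply Finset.mem_erase_of_ne_of_mem
      · exact fun hcc => by rw [hcc] at hh; omega
      · rw [mem_ebset]; exact ⟨by omega, hc⟩
    · apply Finset.mem_union_right
      rw [memL]
      exact ⟨Fin.lt_def.mpr hh.1, hh.2, hc⟩
  have hcard := (Finset.card_le_card hsub).trans (Finset.card_union_le _ _)
  rcases le_or_gt (p u + p v) (2 * (n : ℤ)) with hc | hc
  · have humem : u ∈ ebset n p v := by rw [mem_ebset]; exact ⟨by omega, hc⟩
    rw [if_pos hc]
    have hpos : 0 < (ebset n p v).card := Finset.card_pos.mpr ⟨u, humem⟩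
    have h2 : ((ebset n p u).card : ℤ) ≤ (((ebset n p v).erase u).card : ℤ) + ((L.card : ℕ) : ℤ) := by
      exact_mod_cast hcard
    have h3 : (((ebset n p v).erase u).card : ℤ) = ((ebset n p v).card : ℤ) - 1 := by
      rw [Finset.card_erase_of_mem humem]
      omega
    omega
  · have := Finset.card_erase_le (s := ebset n p v) (a := u)
    rw [if_neg (by omega)]
    omega

lemma lamZ_anti (hav : ∀ i j : Fin m, p i + p j ≠ 2 * (n : ℤ) + 1)
    (hsm : StrictMono p) : Antitone (lamZ n k p) := by
  apply antitone_of_consec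
  intro u hu
  have h1 := eb_consec_a (n := n) hav hsm u hu trivial
  have h2 : p u + 1 ≤ p ⟨(u : ℕ) + 1, hu⟩ := by
    have : u < (⟨(u : ℕ) + 1, hu⟩ : Fin m) := by rw [Fin.lt_def]; simp
    have := hsm this
    omega
  have hval : ((⟨(u : ℕ) + 1, hu⟩ : Fin m) : ℕ) = (u : ℕ) + 1 := rfl
  unfold lamZ
  rcases le_or_gt (p u + p ⟨(u : ℕ) + 1, hu⟩) (2 * (n : ℤ)) with hc | hc
  · rw [if_pos hc] at h1; omega
  · rw [if_neg (by omega)] at h1; omega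

lemma lamZ_eq_consec (hav : ∀ i j : Fin m, p i + p j ≠ 2 * (n : ℤ) + 1)
    (hsm : StrictMono p) (u : Fin m) (hu : (u : ℕ) + 1 < m)
    (heq : lamZ n k p u = lamZ n k p ⟨(u : ℕ) + 1, hu⟩) :
    2 * (n : ℤ) + 2 ≤ p u + p ⟨(u : ℕ) + 1, hu⟩ := by
  by_contra hcon
  push_neg at hcon
  have hav1 := hav u ⟨(u : ℕ) + 1, hu⟩
  have hc : p u + p ⟨(u : ℕ) + 1, hu⟩ ≤ 2 * (n : ℤ) := by omega
  have h1 := eb_consec_a (n := n) hav hsm u hu trivial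
  rw [if_pos hc] at h1
  have h2 : p u + 1 ≤ p ⟨(u : ℕ) + 1, hu⟩ := by
    have : u < (⟨(u : ℕ) + 1, hu⟩ : Fin m) := by rw [Fin.lt_def]; simp
    have := hsm this
    omega
  have hval : ((⟨(u : ℕ) + 1, hu⟩ : Fin m) : ℕ) = (u : ℕ) + 1 := rfl
  unfold lamZ at heq
  omega

lemma lamZ_nonneg (hm : 0 < m) (hnm : n ≤ k + m)
    (hav : ∀ i j : Fin m, p i + p j ≠ 2 * (n : ℤ) + 1)
    (hsm : StrictMono p) (hb : ∀ j, 1 ≤ p j ∧ p j ≤ 2 * (n : ℤ)) (j : Fin m) :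
    0 ≤ lamZ n k p j := by
  obtain ⟨l, hleq⟩ : ∃ l : Fin m, l = ⟨m - 1, by omega⟩ := ⟨_, rfl⟩
  have hlval : (l : ℕ) = m - 1 := by rw [hleq]
  have hEb : ((ebset n p l).card : ℤ) ≤ max 0 (2 * (n : ℤ) - p l) := by
    have hle := Finset.card_le_card_of_injOn (s := ebset n p l)
      (t := Finset.Icc 1 (2 * (n : ℤ) - p l)) (fun h : Fin m => p h) ?_ ?_
    · rw [Int.card_Icc] at hle
      omega
    · intro h hh
      rw [Finset.mem_coe, mem_ebset] at hh
      have := (hb h).1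
      beta_reduce
      rw [Finset.mem_coe, Finset.mem_Icc]
      omega
    · intro h1 _ h2 _ heq
      exact hsm.injective heq
  have h0 : 0 ≤ lamZ n k p l := by
    have := (hb l).2
    unfold lamZ
    omega
  have hjl : j ≤ l := by rw [Fin.le_def]; have := j.isLt; omega
  exact le_trans h0 (lamZ_anti hav hsm hjl)

lemma lamZ_le_nk (hm : 0 < m)
    (hav : ∀ i j : Fin m, p i + p j ≠ 2 * (n : ℤ) + 1)
    (hsm : StrictMono p) (hb : ∀ j, 1 ≤ p j ∧ p j ≤ 2 * (n : ℤ)) (j : Fin m) :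
    lamZ n k p j ≤ (n : ℤ) + k := by
  obtain ⟨z, hzeq⟩ : ∃ z : Fin m, z = ⟨0, hm⟩ := ⟨_, rfl⟩
  have hzval : (z : ℕ) = 0 := by rw [hzeq]
  have hEb : (ebset n p z).card = 0 := by
    have := eb_cb_count (n := n) p z
    omega
  have h0 : lamZ n k p z ≤ (n : ℤ) + k := by
    have := (hb z).1
    unfold lamZ
    omega
  have hjz : z ≤ j := by rw [Fin.le_def]; omega
  exact le_trans (lamZ_anti hav hsm hjz) h0

lemma surj_aux (hm : 0 < m) (hnm : n ≤ k + m) (p : Fin m → ℤ)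
    (hsm : StrictMono p) (hb : ∀ j, 1 ≤ p j ∧ p j ≤ 2 * (n : ℤ))
    (hav : ∀ i j, p i + p j ≠ 2 * (n : ℤ) + 1) :
    ∃ lam : Fin m → ℕ, IsKStrictInRect n k m lam ∧ indexFun n k m lam = p := by
  refine ⟨fun j => (lamZ n k p j).toNat, ?_, ?_⟩
  case _ =>
    have hcast : ∀ j, (((lamZ n k p j).toNat : ℤ)) = lamZ n k p j :=
      fun j => Int.toNat_of_nonneg (lamZ_nonneg hm hnm hav hsm hb j)
    have hanti : Antitone (fun j => (lamZ n k p j).toNat) := by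
      intro i j hij
      have := lamZ_anti (k := k) hav hsm hij
      simp only
      omega
    have hcons : ∀ i j : Fin m, i < j →
        (lamZ n k p i).toNat = (lamZ n k p j).toNat → (lamZ n k p i).toNat ≤ k := by
      intro i j hij heqn
      have hvij : (i : ℕ) < (j : ℕ) := hij
      have hu : (i : ℕ) + 1 < m := by have := j.isLt; omega
      have heqZ : lamZ n k p i = lamZ n k p j := by
        have := hcast i; have := hcast j; omega
      have hbetween1 : lamZ n k p ⟨(i : ℕ) + 1, hu⟩ ≤ lamZ n k p i :=
        lamZ_anti hav hsm (by rw [Fin.le_def]; simp)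
      have hbetween2 : lamZ n k p j ≤ lamZ n k p ⟨(i : ℕ) + 1, hu⟩ :=
        lamZ_anti hav hsm (by rw [Fin.le_def]; simp; omega)
      have heqv : lamZ n k p i = lamZ n k p ⟨(i : ℕ) + 1, hu⟩ := by omega
      have hpp := lamZ_eq_consec (k := k) hav hsm i hu heqv
      have hP2 := P2 (k := k) hsm hav (i := i) (j := ⟨(i : ℕ) + 1, hu⟩)
        (by rw [Fin.lt_def]; simp) hpp
      have hval : ((⟨(i : ℕ) + 1, hu⟩ : Fin m) : ℕ) = (i : ℕ) + 1 := rfl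
      omega
    refine ⟨hanti, ?_, ?_⟩
    · intro i j hne hki heq
      simp only at heq hki
      rcases lt_trichotomy i j with h | h | h
      · have := hcons i j h heq; omega
      · exact hne h
      · have := hcons j i h heq.symm; omega
    · intro i
      have := lamZ_le_nk (k := k) hm hav hsm hb i
      have := hcast i
      simp only
      omega
  case _ =>
    have hcast : ∀ j, (((lamZ n k p j).toNat : ℤ)) = lamZ n k p j :=
      fun j => Int.toNat_of_nonneg (lamZ_nonneg hm hnm hav hsm hb j)
    funext j
    have hcseteq : cset n k m (fun j => (lamZ n k p j).toNat) j = ebset n p j := by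
      ext h
      rw [mem_cset, mem_ebset]
      constructor
      · rintro ⟨h1, h2⟩
        refine ⟨h1, ?_⟩
        by_contra hc
        push_neg at hc
        have hav1 := hav h j
        have hge : 2 * (n : ℤ) + 2 ≤ p h + p j := by omega
        have hP2 := P2 (k := k) hsm hav (Fin.lt_def.mpr h1) hge
        have := hcast h; have := hcast j
        omega
      · rintro ⟨h1, h2⟩
        have hP1 := P1 (k := k) hsm (Fin.lt_def.mpr h1) h2
        have := hcast h; have := hcast j
        omega
    rw [indexFun_eq, hcseteq]
    have h1 := hcast j
    have h2 : lamZ n k p j = (n : ℤ) + k + (j : ℕ) + 1 - p j - ((ebset n p j).card : ℤ) := rfl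
    omega

end Pside

end KSAux

/-- for a `k`-strict partition `λ` fitting in the
`(n−k) × (n+k)` rectangle, the values `p_j(λ)` are strictly increasing and lie
in `{1,…,2n}`, and `λ ↦ {p_1(λ),…,p_m(λ)}` is a bijection from such `k`-strict
partitions onto index sets. -/
theorem kStrict_indexSet_bijection (n k : ℕ) (hn : 1 ≤ n) (hk : k ≤ n - 1) :
    (∀ lam : Fin (n - k) → ℕ, IsKStrictInRect n k (n - k) lam →
      StrictMono (indexFun n k (n - k) lam) ∧
        ∀ j, 1 ≤ indexFun n k (n - k) lam j ∧
          indexFun n k (n - k) lam j ≤ 2 * (n : ℤ)) ∧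
    Set.BijOn
      (fun lam : Fin (n - k) → ℕ => Finset.image (indexFun n k (n - k) lam) Finset.univ)
      {lam | IsKStrictInRect n k (n - k) lam}
      {P | IsIndexSet n (n - k) P} := by
  have hm0 : 0 < n - k := by omega
  have hmn : k + (n - k) ≤ n := by omega
  have hnm : n ≤ k + (n - k) := by omega
  constructor
  · intro lam hks
    exact ⟨KSAux.indexFun_strictMono hks, fun j => KSAux.indexFun_bounds hks hmn j⟩
  · refine ⟨?_, ?_, ?_⟩
    · -- MapsTo
      intro lam hks
      simp only [Set.mem_setOf_eq] at hks ⊢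
      have hsm := KSAux.indexFun_strictMono hks
      have key : ∀ i j : Fin (n - k), i < j →
          indexFun n k (n - k) lam i + indexFun n k (n - k) lam j ≠ 2 * (n : ℤ) + 1 := by
        intro i j hij
        rcases le_or_gt (lam i + lam j) (2 * k + ((j : ℕ) - (i : ℕ))) with h | h
        · have := KSAux.star2 hks hij h; omega
        · have := KSAux.star1 hks hij h; omega
      refine ⟨?_, ?_, ?_⟩
      · rw [Finset.card_image_of_injective _ hsm.injective, Finset.card_univ, Fintype.card_fin]
      · intro x hx
        obtain ⟨j, _, rfl⟩ := Finset.mem_image.mp hx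
        exact KSAux.indexFun_bounds hks hmn j
      · intro x hx y hy
        obtain ⟨i, _, rfl⟩ := Finset.mem_image.mp hx
        obtain ⟨j, _, rfl⟩ := Finset.mem_image.mp hy
        rcases lt_trichotomy i j with h | h | h
        · exact key i j h
        · subst h
          have := KSAux.indexFun_bounds hks hmn i
          omega
        · have := key j i h
          omega
    · -- InjOn
      intro lam hlam mu hmu himg
      simp only [Set.mem_setOf_eq] at hlam hmu
      have himg' : Finset.image (indexFun n k (n - k) lam) Finset.univ
          = Finset.image (indexFun n k (n - k) mu) Finset.univ := himg
      have hsml := KSAux.indexFun_strictMono hlam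
      have hsmm := KSAux.indexFun_strictMono hmu
      have hcs : (Finset.image (indexFun n k (n - k) lam) Finset.univ).card = n - k := by
        rw [Finset.card_image_of_injective _ hsml.injective, Finset.card_univ, Fintype.card_fin]
      have h1 : indexFun n k (n - k) lam
          = (Finset.image (indexFun n k (n - k) lam) Finset.univ).orderEmbOfFin hcs :=
        Finset.orderEmbOfFin_unique hcs
          (fun x => Finset.mem_image_of_mem _ (Finset.mem_univ x)) hsml
      have h2 : indexFun n k (n - k) mu
          = (Finset.image (indexFun n k (n - k) lam) Finset.univ).orderEmbOfFin hcs :=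
        Finset.orderEmbOfFin_unique hcs
          (fun x => by rw [himg']; exact Finset.mem_image_of_mem _ (Finset.mem_univ x)) hsmm
      have hpq : indexFun n k (n - k) lam = indexFun n k (n - k) mu := by rw [h1, h2]
      have keyiff : ∀ (nu : Fin (n - k) → ℕ), IsKStrictInRect n k (n - k) nu →
          ∀ (h j : Fin (n - k)), (h : ℕ) < (j : ℕ) →
          (2 * k + ((j : ℕ) - (h : ℕ)) < nu h + nu j ↔
            indexFun n k (n - k) nu h + indexFun n k (n - k) nu j ≤ 2 * (n : ℤ)) := by
        intro nu hnu h j hhj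
        constructor
        · intro hc; exact KSAux.star1 hnu (Fin.lt_def.mpr hhj) hc
        · intro hc
          by_contra hcc
          push_neg at hcc
          have := KSAux.star2 hnu (Fin.lt_def.mpr hhj) hcc
          omega
      funext j
      have hcset : KSAux.cset n k (n - k) lam j = KSAux.cset n k (n - k) mu j := by
        ext h
        rw [KSAux.mem_cset, KSAux.mem_cset]
        constructor
        · rintro ⟨hh1, hh2⟩
          refine ⟨hh1, ?_⟩
          have := (keyiff lam hlam h j hh1).mp hh2
          rw [hpq] at this
          exact (keyiff mu hmu h j hh1).mpr this
        · rintro ⟨hh1, hh2⟩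
          refine ⟨hh1, ?_⟩
          have := (keyiff mu hmu h j hh1).mp hh2
          rw [← hpq] at this
          exact (keyiff lam hlam h j hh1).mpr this
      have e1 := KSAux.indexFun_eq (n := n) (k := k) lam j
      have e2 := KSAux.indexFun_eq (n := n) (k := k) mu j
      rw [hcset] at e1
      have e3 : indexFun n k (n - k) lam j = indexFun n k (n - k) mu j := congrFun hpq j
      omega
    · -- SurjOn
      intro P hP
      simp only [Set.mem_setOf_eq] at hP
      obtain ⟨hcard, hbnd, hav⟩ := hP
      have hsm : StrictMono (fun j : Fin (n - k) => (P.orderEmbOfFin hcard j : ℤ)) :=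
        (P.orderEmbOfFin hcard).strictMono
      have hb : ∀ j, 1 ≤ P.orderEmbOfFin hcard j ∧ P.orderEmbOfFin hcard j ≤ 2 * (n : ℤ) :=
        fun j => hbnd _ (Finset.orderEmbOfFin_mem P hcard j)
      have hav' : ∀ i j, (P.orderEmbOfFin hcard i : ℤ) + P.orderEmbOfFin hcard j
          ≠ 2 * (n : ℤ) + 1 :=
        fun i j => hav _ (Finset.orderEmbOfFin_mem P hcard i) _ (Finset.orderEmbOfFin_mem P hcard j)
      obtain ⟨lam, hks, heq⟩ := KSAux.surj_aux hm0 hnm _ hsm hb hav'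
      refine ⟨lam, hks, ?_⟩
      show Finset.image (indexFun n k (n - k) lam) Finset.univ = P
      rw [heq]
      apply Finset.coe_injective
      rw [Finset.coe_image, Finset.coe_univ, Set.image_univ]
      exact Finset.range_orderEmbOfFin P hcard
end

section
/- Let V = ℂ^N be equipped with a nondegenerate bilinear form (·,·) that is either symmetric or alternating. Let 0 = F_0 ⊂ F_1 ⊂ ⋯ ⊂ F_N = V be an isotropic flag, i.e. a complete flag such that F_i = F_j^⊥ whenever i + j = N, where ⊥ denotes orthogonal complement with respect to the form. Let Σ ⊆ V be an isotropic subspace (the form vanishes identically on Σ). Then for all i, j in the index set 𝒫(Σ) of Σ relative to F_•, one has i + j ≠ N + 1. -/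
/-- Let `V = ℂ^N` carry a nondegenerate symmetric or alternating
bilinear form, let `F_0 ⊂ F_1 ⊂ ⋯ ⊂ F_N = V` be an isotropic flag
(`F_i = F_j^⊥` whenever `i + j = N`), and let `Σ` be an isotropic subspace.
Then any two members `p, q` of the index set of `Σ` satisfy `p + q ≠ N + 1`. -/
theorem isotropic_indexSet_no_complementary_pairs (N : ℕ)
    (B : LinearMap.BilinForm ℂ (Fin N → ℂ))
    (hB : B.Nondegenerate) (hsa : B.IsSymm ∨ B.IsAlt)
    (F : ℕ → Submodule ℂ (Fin N → ℂ))
    (hmono : ∀ i j : ℕ, i ≤ j → j ≤ N → F i ≤ F j)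
    (hrank : ∀ i : ℕ, i ≤ N → Module.finrank ℂ (F i) = i)
    (hperp : ∀ i j : ℕ, i ≤ N → j ≤ N → i + j = N →
      F i = B.orthogonal (F j))
    (S : Submodule ℂ (Fin N → ℂ))
    (hiso : ∀ x ∈ S, ∀ y ∈ S, B x y = 0) :
    ∀ p q : ℕ, 1 ≤ p → p ≤ N → 1 ≤ q → q ≤ N →
      S ⊓ F (p - 1) < S ⊓ F p → S ⊓ F (q - 1) < S ⊓ F q →
      p + q ≠ N + 1 := by
  intro p q hp1 hpN hq1 hqN hjp hjq hpq
  -- flip helper: B m x = 0 from B x m = 0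
  have hflip : ∀ x m : Fin N → ℂ, B x m = 0 → B m x = 0 := by
    intro x m h
    rcases hsa with hs | ha
    · have := hs.eq m x; rw [this, h]
    · have h2 := ha (x + m)
      simp [map_add, LinearMap.add_apply, ha x, ha m] at h2
      rw [h, add_zero] at h2; exact h2
  -- extract x ∈ S ⊓ F p, x ∉ F (p-1)
  obtain ⟨hle₁, x, hxFp, hxold⟩ := SetLike.lt_iff_le_and_exists.mp hjp
  obtain ⟨hle₂, y, hyFq, hyold⟩ := SetLike.lt_iff_le_and_exists.mp hjq
  obtain ⟨hxS, hxF⟩ := hxFp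
  obtain ⟨hyS, hyF⟩ := hyFq
  have hxnot : x ∉ F (p - 1) := fun h => hxold ⟨hxS, h⟩
  have hynot : y ∉ F (q - 1) := fun h => hyold ⟨hyS, h⟩
  -- F (p-1) = orthogonal (F q)
  have e1 : F (p - 1) = B.orthogonal (F q) :=
    hperp (p - 1) q (by omega) hqN (by omega)
  have e2 : F (q - 1) = B.orthogonal (F p) :=
    hperp (q - 1) p (by omega) hpN (by omega)
  -- get z ∈ F q with B z x ≠ 0
  have : ¬ (∀ n ∈ F q, B n x = 0) := by
    intro h
    exact hxnot (e1 ▸ h)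
  push_neg at this
  obtain ⟨z, hzFq, hzx⟩ := this
  -- K = ker (B.flip x) ⊓ F q
  set K : Submodule ℂ (Fin N → ℂ) := LinearMap.ker (B.flip x) ⊓ F q with hK
  have hmemK : ∀ m, m ∈ F q → B m x = 0 → m ∈ K := by
    intro m h1 h2
    exact ⟨by simpa [LinearMap.mem_ker] using h2, h1⟩
  have hFq1K : F (q - 1) ≤ K := by
    intro m hm
    refine hmemK m (hmono (q - 1) q (by omega) hqN hm) ?_
    refine hflip x m ?_
    rw [e2] at hm
    exact hm x hxF
  have hyK : y ∈ K := hmemK y hyF (hiso y hyS x hxS)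
  have hlt1 : F (q - 1) < K := lt_of_le_of_ne hFq1K (by
    intro h; rw [h] at hynot; exact hynot hyK)
  have hlt2 : K < F q := lt_of_le_of_ne inf_le_right (by
    intro h
    have : z ∈ K := h ▸ hzFq
    exact hzx (by simpa [LinearMap.mem_ker] using this.1))
  have d1 := Submodule.finrank_lt_finrank_of_lt hlt1
  have d2 := Submodule.finrank_lt_finrank_of_lt hlt2
  rw [hrank (q - 1) (by omega)] at d1
  rw [hrank q hqN] at d2
  omega
end

section
/- Let V be a 2n-dimensional complex vector space with a nondegenerate symmetric bilinear form, let H ⊂ V be a hyperplane on which the restriction of the form is nondegenerate, and fix a maximal (i.e. n-dimensional) isotropic subspace L of V. Then the map Σ ↦ Σ ∩ H is a bijection from the set of n-dimensional isotropic subspaces Σ of V in the same family as L, i.e. those with dim(Σ ∩ L) ≡ n (mod 2), onto the set of (n−1)-dimensional isotropic subspaces of H. In particular, for every such Σ one has dim(Σ ∩ H) = n − 1. -/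
set_option linter.unusedSectionVars false

open Module Submodule

namespace IsoAux

variable {V : Type*} [AddCommGroup V] [Module ℂ V] [FiniteDimensional ℂ V]
variable {B : LinearMap.BilinForm ℂ V}

lemma orth_sum (hB : B.Nondegenerate) (hsymm : B.IsSymm) (W : Submodule ℂ V) :
    finrank ℂ W + finrank ℂ (B.orthogonal W) = finrank ℂ V := by
  have h := LinearMap.BilinForm.finrank_add_finrank_orthogonal (B := B) hsymm.isRefl W
  rw [B.orthogonal_top_eq_bot hB] at h
  rw [inf_bot_eq, finrank_bot, add_zero] at h
  exact h

lemma iso_le_orth {W : Submodule ℂ V} (hiso : ∀ x ∈ W, ∀ y ∈ W, B x y = 0) :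
    W ≤ B.orthogonal W := fun x hx => by
  rw [LinearMap.BilinForm.mem_orthogonal_iff]
  intro n hn
  exact hiso n hn x hx

lemma iso_dim_le (hB : B.Nondegenerate) (hsymm : B.IsSymm) {W : Submodule ℂ V}
    (hiso : ∀ x ∈ W, ∀ y ∈ W, B x y = 0) :
    2 * finrank ℂ W ≤ finrank ℂ V := by
  have h1 := Submodule.finrank_mono (iso_le_orth hiso)
  have h2 := orth_sum hB hsymm W
  omega

lemma max_iso_eq_orth (hB : B.Nondegenerate) (hsymm : B.IsSymm) {n : ℕ}
    (hV : finrank ℂ V = 2 * n) {M : Submodule ℂ V} (hM : finrank ℂ M = n)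
    (hiso : ∀ x ∈ M, ∀ y ∈ M, B x y = 0) :
    B.orthogonal M = M := by
  have h2 := orth_sum hB hsymm M
  exact (Submodule.eq_of_le_of_finrank_le (iso_le_orth hiso) (by omega)).symm

lemma orth_sup (p q : Submodule ℂ V) :
    B.orthogonal (p ⊔ q) = B.orthogonal p ⊓ B.orthogonal q := by
  ext x
  simp only [Submodule.mem_inf, LinearMap.BilinForm.mem_orthogonal_iff]
  constructor
  · intro h
    exact ⟨fun n hn => h n (le_sup_left (a := p) (b := q) hn),
      fun n hn => h n (le_sup_right (a := p) (b := q) hn)⟩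
  · rintro ⟨h1, h2⟩ m hm
    obtain ⟨a, ha, b, hb, rfl⟩ := Submodule.mem_sup.mp hm
    have : B (a + b) x = B a x + B b x := by simp
    rw [this, h1 a ha, h2 b hb, add_zero]


lemma inter_hyperplane (hB : B.Nondegenerate) (hsymm : B.IsSymm) {n : ℕ} (hn : 1 ≤ n)
    (hV : finrank ℂ V = 2 * n) {H : Submodule ℂ V} (hH : finrank ℂ H = 2 * n - 1)
    (hBH : (B.restrict H).Nondegenerate)
    {S : Submodule ℂ V} (hS : finrank ℂ S = n)
    (hiso : ∀ x ∈ S, ∀ y ∈ S, B x y = 0) :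
    finrank ℂ (S ⊓ H : Submodule ℂ V) = n - 1 := by
  have hnle : ¬ S ≤ H := by
    intro hle
    have hrank : finrank ℂ (S.comap H.subtype) = n := by
      rw [← hS]
      exact (Submodule.comapSubtypeEquivOfLe hle).finrank_eq
    have hiso' : ∀ x ∈ S.comap H.subtype, ∀ y ∈ S.comap H.subtype, (B.restrict H) x y = 0 := by
      intro x hx y hy
      exact hiso x hx y hy
    have hsymm' : (B.restrict H).IsSymm := by
      refine ⟨fun x y => ?_⟩
      exact hsymm.eq (x : V) (y : V)
    have := iso_dim_le hBH hsymm' hiso'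
    rw [hrank, hH] at this
    omega
  have hlt : H < S ⊔ H := by
    refine lt_of_le_of_ne le_sup_right fun h => hnle ?_
    rw [h]
    exact le_sup_left
  have h1 : finrank ℂ H < finrank ℂ (S ⊔ H : Submodule ℂ V) :=
    Submodule.finrank_lt_finrank_of_lt hlt
  have h2 : finrank ℂ (S ⊔ H : Submodule ℂ V) ≤ finrank ℂ V := Submodule.finrank_le _
  have h3 := Submodule.finrank_sup_add_finrank_inf_eq S H
  rw [hS, hH] at h3
  rw [hH] at h1
  rw [hV] at h2
  omega

lemma familyX (hB : B.Nondegenerate) (hsymm : B.IsSymm) {n : ℕ}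
    (hV : finrank ℂ V = 2 * n)
    {L M₁ M₂ : Submodule ℂ V}
    (hL : finrank ℂ L = n) (hLiso : ∀ x ∈ L, ∀ y ∈ L, B x y = 0)
    (h₁ : finrank ℂ M₁ = n) (h₁iso : ∀ x ∈ M₁, ∀ y ∈ M₁, B x y = 0)
    (h₂ : finrank ℂ M₂ = n) (h₂iso : ∀ x ∈ M₂, ∀ y ∈ M₂, B x y = 0)
    (hne : M₁ ≠ M₂) (hT : finrank ℂ (M₁ ⊓ M₂ : Submodule ℂ V) = n - 1) :
    finrank ℂ (M₁ ⊓ L : Submodule ℂ V) + finrank ℂ (M₂ ⊓ L : Submodule ℂ V)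
      = 2 * finrank ℂ (L ⊓ (M₁ ⊓ M₂) : Submodule ℂ V) + 1 := by
  have hrefl := hsymm.isRefl
  set T : Submodule ℂ V := M₁ ⊓ M₂ with hTdef
  have hn : 1 ≤ n := by
    by_contra h
    have hn0 : n = 0 := by omega
    apply hne
    have e1 : M₁ = ⊥ := Submodule.finrank_eq_zero.mp (by rw [h₁, hn0])
    have e2 : M₂ = ⊥ := Submodule.finrank_eq_zero.mp (by rw [h₂, hn0])
    rw [e1, e2]
  have horthL : B.orthogonal L = L := max_iso_eq_orth hB hsymm hV hL hLiso
  have horth1 : B.orthogonal M₁ = M₁ := max_iso_eq_orth hB hsymm hV h₁ h₁iso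
  have horth2 : B.orthogonal M₂ = M₂ := max_iso_eq_orth hB hsymm hV h₂ h₂iso
  have hTle1 : T ≤ M₁ := inf_le_left
  have hTle2 : T ≤ M₂ := inf_le_right
  have hM1leOT : M₁ ≤ B.orthogonal T := by
    rw [← horth1]; exact LinearMap.BilinForm.orthogonal_le hTle1
  have hM2leOT : M₂ ≤ B.orthogonal T := by
    rw [← horth2]; exact LinearMap.BilinForm.orthogonal_le hTle2
  have hOTsum := orth_sum hB hsymm T
  rw [hT, hV] at hOTsum
  have hOT : finrank ℂ (B.orthogonal T) = n + 1 := by omega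
  have hsupOT : M₁ ⊔ M₂ = B.orthogonal T := by
    apply Submodule.eq_of_le_of_finrank_le (sup_le hM1leOT hM2leOT)
    have h3 := Submodule.finrank_sup_add_finrank_inf_eq M₁ M₂
    rw [h₁, h₂, ← hTdef, hT] at h3
    omega
  set a := finrank ℂ (L ⊓ T : Submodule ℂ V) with hadef
  set b := finrank ℂ (L ⊓ B.orthogonal T : Submodule ℂ V) with hbdef
  have hkey : B.orthogonal (L ⊔ B.orthogonal T) = L ⊓ T := by
    rw [orth_sup, horthL, LinearMap.BilinForm.orthogonal_orthogonal hB hrefl]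
  have hsum1 := orth_sum hB hsymm (L ⊔ B.orthogonal T)
  rw [hkey, hV, ← hadef] at hsum1
  have hsum2 := Submodule.finrank_sup_add_finrank_inf_eq L (B.orthogonal T)
  rw [hL, hOT, ← hbdef] at hsum2
  have hb : b = a + 1 := by omega
  -- bounds
  have hlow1 : L ⊓ T ≤ M₁ ⊓ L := le_inf (le_trans inf_le_right hTle1) inf_le_left
  have hlow2 : L ⊓ T ≤ M₂ ⊓ L := le_inf (le_trans inf_le_right hTle2) inf_le_left
  have hhigh1 : M₁ ⊓ L ≤ L ⊓ B.orthogonal T := le_inf inf_le_right (le_trans inf_le_left hM1leOT)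
  have hhigh2 : M₂ ⊓ L ≤ L ⊓ B.orthogonal T := le_inf inf_le_right (le_trans inf_le_left hM2leOT)
  have hd1low : a ≤ finrank ℂ (M₁ ⊓ L : Submodule ℂ V) := Submodule.finrank_mono hlow1
  have hd2low : a ≤ finrank ℂ (M₂ ⊓ L : Submodule ℂ V) := Submodule.finrank_mono hlow2
  have hd1high : finrank ℂ (M₁ ⊓ L : Submodule ℂ V) ≤ b := Submodule.finrank_mono hhigh1
  have hd2high : finrank ℂ (M₂ ⊓ L : Submodule ℂ V) ≤ b := Submodule.finrank_mono hhigh2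
  -- claim 1 : not both equal a+1
  have claim1 : ¬ (finrank ℂ (M₁ ⊓ L : Submodule ℂ V) = a + 1 ∧
      finrank ℂ (M₂ ⊓ L : Submodule ℂ V) = a + 1) := by
    rintro ⟨e1, e2⟩
    have q1 : M₁ ⊓ L = L ⊓ B.orthogonal T :=
      Submodule.eq_of_le_of_finrank_le hhigh1 (by omega)
    have q2 : M₂ ⊓ L = L ⊓ B.orthogonal T :=
      Submodule.eq_of_le_of_finrank_le hhigh2 (by omega)
    have : L ⊓ B.orthogonal T ≤ L ⊓ T := by
      refine le_inf inf_le_left (le_inf ?_ ?_)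
      · rw [← q1]; exact inf_le_left
      · rw [← q2]; exact inf_le_left
    have := Submodule.finrank_mono this
    omega
  -- representatives
  have hTne1 : ¬ M₁ ≤ T := fun h => by
    have := Submodule.finrank_mono h
    rw [h₁, hT] at this
    omega
  have hTne2 : ¬ M₂ ≤ T := fun h => by
    have := Submodule.finrank_mono h
    rw [h₂, hT] at this
    omega
  obtain ⟨x₁, hx₁M, hx₁T⟩ := SetLike.not_le_iff_exists.mp hTne1
  obtain ⟨x₂, hx₂M, hx₂T⟩ := SetLike.not_le_iff_exists.mp hTne2
  have hx₁0 : x₁ ≠ 0 := fun h => hx₁T (h ▸ T.zero_mem)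
  have hx₂0 : x₂ ≠ 0 := fun h => hx₂T (h ▸ T.zero_mem)
  have hM1eq : T ⊔ (ℂ ∙ x₁) = M₁ := by
    apply Submodule.eq_of_le_of_finrank_le
      (sup_le hTle1 ((Submodule.span_singleton_le_iff_mem _ _).mpr hx₁M))
    have h3 := Submodule.finrank_sup_add_finrank_inf_eq T (ℂ ∙ x₁)
    rw [(Submodule.disjoint_span_singleton' hx₁0).mpr hx₁T |>.eq_bot] at h3
    rw [finrank_bot, finrank_span_singleton hx₁0, hT] at h3
    rw [h₁]
    omega
  have hM2eq : T ⊔ (ℂ ∙ x₂) = M₂ := by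
    apply Submodule.eq_of_le_of_finrank_le
      (sup_le hTle2 ((Submodule.span_singleton_le_iff_mem _ _).mpr hx₂M))
    have h3 := Submodule.finrank_sup_add_finrank_inf_eq T (ℂ ∙ x₂)
    rw [(Submodule.disjoint_span_singleton' hx₂0).mpr hx₂T |>.eq_bot] at h3
    rw [finrank_bot, finrank_span_singleton hx₂0, hT] at h3
    rw [h₂]
    omega
  have hc : B x₁ x₂ ≠ 0 := by
    intro h0
    have hmem : x₁ ∈ B.orthogonal (B.orthogonal T) := by
      rw [LinearMap.BilinForm.mem_orthogonal_iff]
      intro y hy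
      rw [← hsupOT] at hy
      obtain ⟨u, hu, v, hv, rfl⟩ := Submodule.mem_sup.mp hy
      rw [← hM2eq] at hv
      obtain ⟨t, ht, w, hw, rfl⟩ := Submodule.mem_sup.mp hv
      obtain ⟨c, rfl⟩ := Submodule.mem_span_singleton.mp hw
      have : B (u + (t + c • x₂)) x₁ = B u x₁ + (B t x₁ + c * B x₂ x₁) := by
        simp only [map_add, LinearMap.add_apply, map_smul, LinearMap.smul_apply,
          smul_eq_mul]
        try ring
      rw [this, h₁iso u hu x₁ hx₁M,
        h₁iso t (hTle1 ht) x₁ hx₁M]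
      have : B x₂ x₁ = B x₁ x₂ := by rw [← hsymm.eq x₁ x₂]
      rw [this, h0]
      ring
    rw [LinearMap.BilinForm.orthogonal_orthogonal hB hrefl] at hmem
    exact hx₁T hmem
  -- claim 2 : one of them equals a+1
  have claim2 : finrank ℂ (M₁ ⊓ L : Submodule ℂ V) = a + 1 ∨
      finrank ℂ (M₂ ⊓ L : Submodule ℂ V) = a + 1 := by
    have hnotle : ¬ (L ⊓ B.orthogonal T ≤ L ⊓ T) := fun h => by
      have := Submodule.finrank_mono h
      omega
    obtain ⟨x, hx, hxn⟩ := SetLike.not_le_iff_exists.mp hnotle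
    obtain ⟨hxL, hxOT⟩ := Submodule.mem_inf.mp hx
    have hxnT : x ∉ T := fun h => hxn (Submodule.mem_inf.mpr ⟨hxL, h⟩)
    rw [← hsupOT] at hxOT
    obtain ⟨u, hu, v, hv, hxuv⟩ := Submodule.mem_sup.mp hxOT
    have huv : B u v = 0 := by
      have h0 : B x x = 0 := hLiso x hxL x hxL
      have hvu : B v u = B u v := by rw [← hsymm.eq u v]
      have : B x x = B u u + B u v + (B v u + B v v) := by
        rw [← hxuv]; simp [map_add, LinearMap.add_apply]; ring
      rw [h₁iso u hu u hu, h₂iso v hv v hv, hvu, h0] at this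
      have h2 : (2 : ℂ) * B u v = 0 := by linear_combination -this
      simpa using (mul_eq_zero.mp h2).resolve_left (by norm_num)
    rw [← hM1eq] at hu
    obtain ⟨t₁, ht₁, w₁, hw₁, rfl⟩ := Submodule.mem_sup.mp hu
    obtain ⟨s₁, rfl⟩ := Submodule.mem_span_singleton.mp hw₁
    rw [← hM2eq] at hv
    obtain ⟨t₂, ht₂, w₂, hw₂, rfl⟩ := Submodule.mem_sup.mp hv
    obtain ⟨s₂, rfl⟩ := Submodule.mem_span_singleton.mp hw₂
    have hexp : B (t₁ + s₁ • x₁) (t₂ + s₂ • x₂)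
        = B t₁ t₂ + s₂ * B t₁ x₂ + s₁ * B x₁ t₂ + s₁ * (s₂ * B x₁ x₂) := by
      simp only [map_add, LinearMap.add_apply, map_smul, LinearMap.smul_apply,
        smul_eq_mul]
      try ring
    rw [hexp, h₁iso t₁ (hTle1 ht₁) t₂ (hTle1 ht₂), h₂iso t₁ (hTle2 ht₁) x₂ hx₂M,
      h₁iso x₁ hx₁M t₂ (hTle1 ht₂)] at huv
    have hs : s₁ = 0 ∨ s₂ = 0 := by
      have : s₁ * (s₂ * B x₁ x₂) = 0 := by linear_combination huv
      rcases mul_eq_zero.mp this with h | h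
      · exact Or.inl h
      · rcases mul_eq_zero.mp h with h | h
        · exact Or.inr h
        · exact absurd h hc
    rcases hs with hs | hs
    · right
      have hxM : x ∈ M₂ := by
        rw [← hxuv, hs]
        simp only [zero_smul, add_zero]
        exact M₂.add_mem (hTle2 ht₁) (Submodule.add_mem _ (hTle2 ht₂)
          (M₂.smul_mem s₂ hx₂M))
      have hlt : L ⊓ T < M₂ ⊓ L := lt_of_le_of_ne hlow2 fun h => by
        exact hxn (h ▸ Submodule.mem_inf.mpr ⟨hxM, hxL⟩)
      have := Submodule.finrank_lt_finrank_of_lt hlt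
      omega
    · left
      have hxM : x ∈ M₁ := by
        rw [← hxuv, hs]
        simp only [zero_smul, add_zero]
        exact M₁.add_mem (Submodule.add_mem _ (hTle1 ht₁) (M₁.smul_mem s₁ hx₁M))
          (hTle1 ht₂)
      have hlt : L ⊓ T < M₁ ⊓ L := lt_of_le_of_ne hlow1 fun h => by
        exact hxn (h ▸ Submodule.mem_inf.mpr ⟨hxM, hxL⟩)
      have := Submodule.finrank_lt_finrank_of_lt hlt
      omega
  omega


lemma extend_isotropic (hB : B.Nondegenerate) (hsymm : B.IsSymm) {n : ℕ} (hn : 1 ≤ n)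
    (hV : finrank ℂ V = 2 * n) {T : Submodule ℂ V} (hT : finrank ℂ T = n - 1)
    (hTiso : ∀ x ∈ T, ∀ y ∈ T, B x y = 0) :
    ∃ S₁ S₂ : Submodule ℂ V, T ≤ S₁ ∧ T ≤ S₂ ∧
      finrank ℂ S₁ = n ∧ finrank ℂ S₂ = n ∧
      (∀ x ∈ S₁, ∀ y ∈ S₁, B x y = 0) ∧ (∀ x ∈ S₂, ∀ y ∈ S₂, B x y = 0) ∧
      S₁ ≠ S₂ ∧ finrank ℂ (S₁ ⊓ S₂ : Submodule ℂ V) = n - 1 := by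
  have hrefl := hsymm.isRefl
  have hTleOT : T ≤ B.orthogonal T := iso_le_orth hTiso
  have hOTsum := orth_sum hB hsymm T
  rw [hT, hV] at hOTsum
  have hOT : finrank ℂ (B.orthogonal T) = n + 1 := by omega
  -- complement of T inside its orthogonal
  set T₀ : Submodule ℂ (B.orthogonal T) := T.comap (B.orthogonal T).subtype with hT₀def
  obtain ⟨W₀, hW₀⟩ := T₀.exists_isCompl
  set W : Submodule ℂ V := W₀.map (B.orthogonal T).subtype with hWdef
  have hWle : W ≤ B.orthogonal T := Submodule.map_subtype_le _ _
  have hWT : W ⊓ T = ⊥ := by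
    rw [eq_bot_iff]
    rintro x hx
    obtain ⟨hxW, hxT⟩ := Submodule.mem_inf.mp hx
    obtain ⟨y, hy, rfl⟩ := Submodule.mem_map.mp hxW
    have hyT : y ∈ T₀ := hxT
    have : y ∈ T₀ ⊓ W₀ := ⟨hyT, hy⟩
    rw [hW₀.disjoint.eq_bot] at this
    have hy0 : y = 0 := by simpa using this
    simp [hy0]
  have hWsup : W ⊔ T = B.orthogonal T := by
    have := congrArg (Submodule.map (B.orthogonal T).subtype) (codisjoint_iff.mp hW₀.codisjoint)
    rw [Submodule.map_sup, Submodule.map_comap_subtype, Submodule.map_top,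
      Submodule.range_subtype, inf_eq_right.mpr hTleOT] at this
    rw [sup_comm]
    exact this
  have hWrank : finrank ℂ W = 2 := by
    have h3 := Submodule.finrank_sup_add_finrank_inf_eq W T
    rw [hWsup, hWT, hOT, hT, finrank_bot] at h3
    omega
  -- everything in the orthogonal of T pairs to zero with T
  have hTW0 : ∀ t ∈ T, ∀ w ∈ B.orthogonal T, B t w = 0 := by
    intro t ht w hw
    exact (LinearMap.BilinForm.mem_orthogonal_iff.mp hw) t ht
  have hTW0' : ∀ w ∈ B.orthogonal T, ∀ t ∈ T, B w t = 0 := by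
    intro w hw t ht
    have h := hTW0 t ht w hw
    have h2 := hsymm.eq w t
    rw [h2]
    exact h
  -- pseudo-nondegeneracy on W
  have hnd : ∀ w ∈ W, (∀ w' ∈ W, B w w' = 0) → w = 0 := by
    intro w hw hww
    have hmem : w ∈ B.orthogonal (B.orthogonal T) := by
      rw [LinearMap.BilinForm.mem_orthogonal_iff]
      intro y hy
      rw [← hWsup] at hy
      obtain ⟨w', hw', t, ht, rfl⟩ := Submodule.mem_sup.mp hy
      have h1 : B w' w = 0 := by
        have := hww w' hw'
        rw [← hsymm.eq w w']
        simpa using this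
      have h2 : B t w = 0 := hTW0 t ht w (hWle hw)
      have : B (w' + t) w = B w' w + B t w := by simp
      rw [this, h1, h2, add_zero]
    rw [LinearMap.BilinForm.orthogonal_orthogonal hB hrefl] at hmem
    have : w ∈ W ⊓ T := Submodule.mem_inf.mpr ⟨hw, hmem⟩
    rw [hWT] at this
    simpa using this
  -- find a nonzero isotropic vector x₁ in W
  obtain ⟨x₁, hx₁W, hx₁0, hx₁iso⟩ :
      ∃ x₁, x₁ ∈ W ∧ x₁ ≠ 0 ∧ B x₁ x₁ = 0 := by
    have hWne : W ≠ ⊥ := by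
      intro h
      rw [h, finrank_bot] at hWrank
      omega
    obtain ⟨e, heW, he0⟩ := Submodule.exists_mem_ne_zero_of_ne_bot hWne
    by_cases hee : B e e = 0
    · exact ⟨e, heW, he0, hee⟩
    · have hspan : (ℂ ∙ e) < W := by
        refine lt_of_le_of_ne ((Submodule.span_singleton_le_iff_mem _ _).mpr heW) ?_
        intro h
        rw [← h, finrank_span_singleton he0] at hWrank
        omega
      obtain ⟨f, hfW, hfe⟩ := SetLike.exists_of_lt hspan
      obtain ⟨r, hr⟩ := IsAlgClosed.exists_pow_nat_eq (k := ℂ)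
        ((B e f) ^ 2 - B e e * B f f) (n := 2) (by norm_num)
      set s : ℂ := (-(B e f) + r) / (B e e) with hsdef
      refine ⟨f + s • e, Submodule.add_mem _ hfW (W.smul_mem s heW), ?_, ?_⟩
      · intro h
        apply hfe
        have : f = -(s • e) := eq_neg_of_add_eq_zero_left h
        rw [this]
        exact Submodule.neg_mem _
          (Submodule.smul_mem _ _ (Submodule.mem_span_singleton_self e))
      · have hfe' : B f e = B e f := by rw [← hsymm.eq e f]
        have hexp : B (f + s • e) (f + s • e)
            = B f f + 2 * s * B e f + s ^ 2 * B e e := by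
          simp only [map_add, LinearMap.add_apply, map_smul, LinearMap.smul_apply,
            smul_eq_mul]
          rw [hfe']
          ring
        have hs : (B e) e * s = -(B e) f + r := by
          rw [hsdef]; field_simp
        have hX : (B e) e * ((B f) f + 2 * s * (B e) f + s ^ 2 * (B e) e) = 0 := by
          linear_combination ((B e) e * s + (B e) f + r) * hs + hr
        rw [hexp]
        rcases mul_eq_zero.mp hX with h | h
        · exact absurd h hee
        · exact h
  -- find x₂
  have : ¬ ∀ w' ∈ W, B x₁ w' = 0 := fun h => hx₁0 (hnd x₁ hx₁W h)
  push_neg at this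
  obtain ⟨y, hyW, hc⟩ := this
  set c : ℂ := B x₁ y with hcdef
  set x₂ : V := c⁻¹ • y - (B y y / (2 * c ^ 2)) • x₁ with hx₂def
  have hx₂W : x₂ ∈ W := Submodule.sub_mem _ (W.smul_mem _ hyW) (W.smul_mem _ hx₁W)
  have hyx₁ : B y x₁ = B x₁ y := by rw [← hsymm.eq x₁ y]
  have hx₁x₂ : B x₁ x₂ = 1 := by
    rw [hx₂def]
    simp only [map_sub, map_smul, LinearMap.smul_apply, smul_eq_mul]
    rw [hx₁iso, ← hcdef]
    field_simp
    ring
  have hx₂iso : B x₂ x₂ = 0 := by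
    rw [hx₂def]
    simp only [map_sub, map_smul, LinearMap.sub_apply, LinearMap.smul_apply, smul_eq_mul]
    rw [hx₁iso, hyx₁, ← hcdef]
    field_simp
    have h1 : c ^ 4 * c⁻¹ ^ 4 = 1 := by rw [← mul_pow, mul_inv_cancel₀ hc, one_pow]
    linear_combination (0 : ℂ) * h1
  -- the two extensions
  have hx₁OT : x₁ ∈ B.orthogonal T := hWle hx₁W
  have hx₂OT : x₂ ∈ B.orthogonal T := hWle hx₂W
  have hx₂0 : x₂ ≠ 0 := by
    intro h
    rw [h] at hx₁x₂
    simp at hx₁x₂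
  have hx₁T : x₁ ∉ T := fun h => by
    have : x₁ ∈ W ⊓ T := Submodule.mem_inf.mpr ⟨hx₁W, h⟩
    rw [hWT] at this
    exact hx₁0 (by simpa using this)
  have hx₂T : x₂ ∉ T := fun h => by
    have : x₂ ∈ W ⊓ T := Submodule.mem_inf.mpr ⟨hx₂W, h⟩
    rw [hWT] at this
    exact hx₂0 (by simpa using this)
  have key : ∀ x : V, x ∈ B.orthogonal T → x ∉ T → B x x = 0 →
      finrank ℂ (T ⊔ (ℂ ∙ x) : Submodule ℂ V) = n ∧
        ∀ u ∈ (T ⊔ (ℂ ∙ x) : Submodule ℂ V), ∀ v ∈ (T ⊔ (ℂ ∙ x) : Submodule ℂ V),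
          B u v = 0 := by
    intro x hxOT hxT hxx
    have hx0 : x ≠ 0 := fun h => hxT (h ▸ T.zero_mem)
    constructor
    · have h3 := Submodule.finrank_sup_add_finrank_inf_eq T (ℂ ∙ x)
      rw [(Submodule.disjoint_span_singleton' hx0).mpr hxT |>.eq_bot, finrank_bot,
        finrank_span_singleton hx0, hT] at h3
      omega
    · intro u hu v hv
      obtain ⟨t₁, ht₁, w₁, hw₁, rfl⟩ := Submodule.mem_sup.mp hu
      obtain ⟨s₁, rfl⟩ := Submodule.mem_span_singleton.mp hw₁
      obtain ⟨t₂, ht₂, w₂, hw₂, rfl⟩ := Submodule.mem_sup.mp hv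
      obtain ⟨s₂, rfl⟩ := Submodule.mem_span_singleton.mp hw₂
      have hexp : B (t₁ + s₁ • x) (t₂ + s₂ • x)
          = B t₁ t₂ + s₂ * B t₁ x + s₁ * B x t₂ + s₁ * (s₂ * B x x) := by
        simp only [map_add, LinearMap.add_apply, map_smul, LinearMap.smul_apply,
          smul_eq_mul]
        ring
      rw [hexp, hTiso t₁ ht₁ t₂ ht₂, hTW0 t₁ ht₁ x hxOT, hTW0' x hxOT t₂ ht₂, hxx]
      ring
  obtain ⟨hr₁, hiso₁⟩ := key x₁ hx₁OT hx₁T hx₁iso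
  obtain ⟨hr₂, hiso₂⟩ := key x₂ hx₂OT hx₂T hx₂iso
  have hSne : T ⊔ (ℂ ∙ x₁) ≠ T ⊔ (ℂ ∙ x₂) := by
    intro h
    have hx₂mem : x₂ ∈ T ⊔ (ℂ ∙ x₁) := by
      rw [h]
      exact Submodule.mem_sup_right (Submodule.mem_span_singleton_self x₂)
    have hx₁mem : x₁ ∈ T ⊔ (ℂ ∙ x₁) :=
      Submodule.mem_sup_right (Submodule.mem_span_singleton_self x₁)
    have := hiso₁ x₁ hx₁mem x₂ hx₂mem
    rw [hx₁x₂] at this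
    exact one_ne_zero this
  refine ⟨T ⊔ (ℂ ∙ x₁), T ⊔ (ℂ ∙ x₂), le_sup_left, le_sup_left, hr₁, hr₂,
    hiso₁, hiso₂, hSne, ?_⟩
  have hDle : T ≤ (T ⊔ (ℂ ∙ x₁)) ⊓ (T ⊔ (ℂ ∙ x₂)) := le_inf le_sup_left le_sup_left
  have hDlt : (T ⊔ (ℂ ∙ x₁)) ⊓ (T ⊔ (ℂ ∙ x₂)) < T ⊔ (ℂ ∙ x₁) := by
    refine lt_of_le_of_ne inf_le_left fun h => hSne ?_
    have hle : T ⊔ (ℂ ∙ x₁) ≤ T ⊔ (ℂ ∙ x₂) := by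
      rw [← h]
      exact inf_le_right
    exact Submodule.eq_of_le_of_finrank_le hle (by rw [hr₁, hr₂])
  have h1 := Submodule.finrank_mono hDle
  have h2 := Submodule.finrank_lt_finrank_of_lt hDlt
  rw [hT] at h1
  rw [hr₁] at h2
  omega

end IsoAux

/-- let `V` be a `2n`-dimensional complex vector space with a
nondegenerate symmetric bilinear form, `H` a hyperplane on which the form is
nondegenerate, and `L` a maximal isotropic subspace. Then `Σ ↦ Σ ∩ H` is a
bijection from the `n`-dimensional isotropic subspaces in the same family as
`L` (those with `dim(Σ ∩ L) ≡ n (mod 2)`) onto the `(n−1)`-dimensional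
isotropic subspaces of `H`. -/
theorem maximal_isotropic_family_bijOn_hyperplane
    (V : Type*) [AddCommGroup V] [Module ℂ V] [FiniteDimensional ℂ V]
    (n : ℕ) (hn : 1 ≤ n) (hV : Module.finrank ℂ V = 2 * n)
    (B : LinearMap.BilinForm ℂ V) (hB : B.Nondegenerate) (hsymm : B.IsSymm)
    (H : Submodule ℂ V) (hH : Module.finrank ℂ H = 2 * n - 1)
    (hBH : (B.restrict H).Nondegenerate)
    (L : Submodule ℂ V) (hL : Module.finrank ℂ L = n)
    (hLiso : ∀ x ∈ L, ∀ y ∈ L, B x y = 0) :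
    Set.BijOn (fun S : Submodule ℂ V => S ⊓ H)
      {S : Submodule ℂ V | Module.finrank ℂ S = n ∧
        (∀ x ∈ S, ∀ y ∈ S, B x y = 0) ∧
        Module.finrank ℂ (S ⊓ L : Submodule ℂ V) % 2 = n % 2}
      {T : Submodule ℂ V | T ≤ H ∧ Module.finrank ℂ T = n - 1 ∧
        ∀ x ∈ T, ∀ y ∈ T, B x y = 0} := by
  refine ⟨?_, ?_, ?_⟩
  · -- MapsTo
    rintro S ⟨hSn, hSiso, -⟩
    exact ⟨inf_le_right, IsoAux.inter_hyperplane hB hsymm hn hV hH hBH hSn hSiso,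
      fun x hx y hy => hSiso x (Submodule.mem_inf.mp hx).1 y (Submodule.mem_inf.mp hy).1⟩
  · -- InjOn
    rintro S₁ ⟨h₁n, h₁iso, h₁par⟩ S₂ ⟨h₂n, h₂iso, h₂par⟩ h
    simp only at h
    by_contra hne
    have hTrank := IsoAux.inter_hyperplane hB hsymm hn hV hH hBH h₁n h₁iso
    have hTle : S₁ ⊓ H ≤ S₁ ⊓ S₂ :=
      le_inf inf_le_left (le_trans (le_of_eq h) inf_le_left)
    have hlt : S₁ ⊓ S₂ < S₁ := by
      refine lt_of_le_of_ne inf_le_left fun hh => hne ?_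
      have hle : S₁ ≤ S₂ := by
        rw [← hh]; exact inf_le_right
      exact Submodule.eq_of_le_of_finrank_le hle (by rw [h₁n, h₂n])
    have h1 := Submodule.finrank_mono hTle
    have h2 := Submodule.finrank_lt_finrank_of_lt hlt
    rw [hTrank] at h1
    rw [h₁n] at h2
    have hinf : Module.finrank ℂ (S₁ ⊓ S₂ : Submodule ℂ V) = n - 1 := by omega
    have hfam := IsoAux.familyX hB hsymm hV hL hLiso h₁n h₁iso h₂n h₂iso hne hinf
    omega
  · -- SurjOn
    rintro T ⟨hTH, hTrank, hTiso⟩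
    obtain ⟨S₁, S₂, hTS₁, hTS₂, hr₁, hr₂, hiso₁, hiso₂, hSne, hSinf⟩ :=
      IsoAux.extend_isotropic hB hsymm hn hV hTrank hTiso
    have hfam := IsoAux.familyX hB hsymm hV hL hLiso hr₁ hiso₁ hr₂ hiso₂ hSne hSinf
    have himg : ∀ S : Submodule ℂ V, Module.finrank ℂ S = n →
        (∀ x ∈ S, ∀ y ∈ S, B x y = 0) → T ≤ S → S ⊓ H = T := by
      intro S hSn hSiso hTS
      have hrank := IsoAux.inter_hyperplane hB hsymm hn hV hH hBH hSn hSiso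
      exact (Submodule.eq_of_le_of_finrank_le (le_inf hTS hTH)
        (by rw [hrank, hTrank])).symm
    by_cases hpar : Module.finrank ℂ (S₁ ⊓ L : Submodule ℂ V) % 2 = n % 2
    · exact ⟨S₁, ⟨hr₁, hiso₁, hpar⟩, himg S₁ hr₁ hiso₁ hTS₁⟩
    · refine ⟨S₂, ⟨hr₂, hiso₂, by omega⟩, himg S₂ hr₂ hiso₂ hTS₂⟩
end

section
/- Work in the polynomial ring ℤ[x_1,…,x_N] (any finite number N of variables). For r ≥ 0 define q_r := ∑_{i=0}^r e_i · h_{r−i}, where e_i is the i-th elementary symmetric polynomial and h_j the j-th complete homogeneous symmetric polynomial in x_1,…,x_N; set q_r = 0 for r < 0. Then for every integer r ≥ 1, q_r² + 2 ∑_{i=1}^r (−1)^i q_{r+i} q_{r−i} = 0. (These are the defining relations of the ring of Schur Q-functions; for r = 1 this is q_1² = 2q_2.) -/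
open Finset MvPolynomial

/-- `q_r = ∑_{i=0}^r e_i · h_{r-i}` in `ℤ[x_1, …, x_N]`. -/
noncomputable def qPoly (N r : ℕ) : MvPolynomial (Fin N) ℤ :=
  ∑ i ∈ Finset.range (r + 1),
    MvPolynomial.esymm (Fin N) ℤ i * MvPolynomial.hsymm (Fin N) ℤ (r - i)

/-- all multisets over `Fin N` of cardinality `k` -/
noncomputable def msets (N k : ℕ) : Finset (Multiset (Fin N)) :=
  (Finset.univ : Finset (Sym (Fin N) k)).image Sym.toMultiset

lemma mem_msets {N k : ℕ} (m : Multiset (Fin N)) : m ∈ msets N k ↔ Multiset.card m = k := by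
  constructor
  · rintro hm
    simp only [msets, mem_image] at hm
    obtain ⟨s, -, rfl⟩ := hm
    exact s.2
  · intro h
    simp only [msets, mem_image]
    exact ⟨⟨m, h⟩, mem_univ _, rfl⟩

lemma hsymm_eq_sum_msets (N k : ℕ) :
    hsymm (Fin N) ℤ k = ∑ m ∈ msets N k, (m.map X).prod := by
  rw [hsymm, msets, Finset.sum_image (fun a _ b _ h => Sym.coe_injective h)]
  rfl

noncomputable def idxSet (N n : ℕ) : Finset (Finset (Fin N) × Multiset (Fin N)) :=
  (Finset.range (n+1)).biUnion
    (fun i => (powersetCard i (univ : Finset (Fin N))) ×ˢ msets N (n - i))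

lemma mem_idxSet {N n : ℕ} (p : Finset (Fin N) × Multiset (Fin N)) :
    p ∈ idxSet N n ↔ p.1.card + Multiset.card p.2 = n := by
  simp only [idxSet, mem_biUnion, mem_range, mem_product, mem_powersetCard, mem_msets]
  constructor
  · rintro ⟨i, hi, ⟨-, hc⟩, hm⟩; omega
  · intro h; exact ⟨p.1.card, by omega, ⟨subset_univ _, rfl⟩, by omega⟩

noncomputable def qflip (N : ℕ) (p : Finset (Fin N) × Multiset (Fin N)) :
    Finset (Fin N) × Multiset (Fin N) :=
  if h : (p.1.1 + p.2).toFinset.Nonempty then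
    let v := (p.1.1 + p.2).toFinset.min' h
    if v ∈ p.1 then (p.1.erase v, v ::ₘ p.2) else (insert v p.1, p.2.erase v)
  else p

lemma flip_combined {N : ℕ} (p : Finset (Fin N) × Multiset (Fin N))
    (h : (p.1.1 + p.2).toFinset.Nonempty) :
    (qflip N p).1.1 + (qflip N p).2 = p.1.1 + p.2 := by
  rw [qflip, dif_pos h]
  set v := (p.1.1 + p.2).toFinset.min' h with hv
  have hvc : v ∈ p.1.1 + p.2 := Multiset.mem_toFinset.mp (Finset.min'_mem _ h)
  by_cases hvp : v ∈ p.1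
  · simp only [if_pos hvp]
    show (p.1.erase v).1 + (v ::ₘ p.2) = _
    rw [Finset.erase_val, Multiset.add_cons, ← Multiset.cons_add,
      Multiset.cons_erase (Finset.mem_def.mp hvp)]
  · simp only [if_neg hvp]
    show (insert v p.1).1 + p.2.erase v = _
    have hvm : v ∈ p.2 := by
      rcases Multiset.mem_add.mp hvc with h' | h'
      · exact absurd (Finset.mem_def.mpr h') hvp
      · exact h'
    rw [Finset.insert_val_of_notMem hvp, Multiset.cons_add, ← Multiset.add_cons,
      Multiset.cons_erase hvm]

lemma qflip_flip {N : ℕ} (p : Finset (Fin N) × Multiset (Fin N))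
    (h : (p.1.1 + p.2).toFinset.Nonempty) :
    qflip N (qflip N p) = p := by
  have hcomb := flip_combined p h
  have h2 : ((qflip N p).1.1 + (qflip N p).2).toFinset.Nonempty := by rw [hcomb]; exact h
  have hvc : (p.1.1 + p.2).toFinset.min' h ∈ p.1.1 + p.2 :=
    Multiset.mem_toFinset.mp (Finset.min'_mem _ h)
  conv_lhs => rw [qflip, dif_pos h2]
  have hveq : ((qflip N p).1.1 + (qflip N p).2).toFinset.min' h2
      = (p.1.1 + p.2).toFinset.min' h := by
    congr 1 <;> rw [hcomb]
  rw [hveq]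
  set v := (p.1.1 + p.2).toFinset.min' h with hv
  by_cases hvp : v ∈ p.1
  · have hflip : qflip N p = (p.1.erase v, v ::ₘ p.2) := by rw [qflip, dif_pos h, if_pos hvp]
    rw [hflip] at *
    simp only []
    rw [if_neg (Finset.notMem_erase v p.1)]
    ext1
    · exact Finset.insert_erase hvp
    · exact Multiset.erase_cons_head v p.2
  · have hvm : v ∈ p.2 := by
      rcases Multiset.mem_add.mp hvc with h' | h'
      · exact absurd (Finset.mem_def.mpr h') hvp
      · exact h'
    have hflip : qflip N p = (insert v p.1, p.2.erase v) := by rw [qflip, dif_pos h, if_neg hvp]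
    rw [hflip] at *
    simp only []
    rw [if_pos (Finset.mem_insert_self v p.1)]
    ext1
    · exact Finset.erase_insert hvp
    · exact Multiset.cons_erase hvm

lemma nonempty_of_mem {N n : ℕ} (hn : 1 ≤ n) {p : Finset (Fin N) × Multiset (Fin N)}
    (hp : p ∈ idxSet N n) : (p.1.1 + p.2).toFinset.Nonempty := by
  rw [Multiset.toFinset_nonempty, ← Multiset.card_pos, Multiset.card_add]
  have := (mem_idxSet p).mp hp
  have : p.1.card = Multiset.card p.1.1 := rfl
  omega

lemma qflip_mem {N n : ℕ} (hn : 1 ≤ n) {p : Finset (Fin N) × Multiset (Fin N)}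
    (hp : p ∈ idxSet N n) : qflip N p ∈ idxSet N n := by
  have h := nonempty_of_mem hn hp
  rw [mem_idxSet] at hp ⊢
  have hcomb := congrArg Multiset.card (flip_combined p h)
  rw [Multiset.card_add, Multiset.card_add] at hcomb
  have h1 : (qflip N p).1.card = Multiset.card (qflip N p).1.1 := rfl
  have h2 : p.1.card = Multiset.card p.1.1 := rfl
  omega

lemma qflip_ne {N n : ℕ} (hn : 1 ≤ n) {p : Finset (Fin N) × Multiset (Fin N)}
    (hp : p ∈ idxSet N n) : qflip N p ≠ p := by
  have h := nonempty_of_mem hn hp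
  rw [qflip, dif_pos h]
  set v := (p.1.1 + p.2).toFinset.min' h with hv
  by_cases hvp : v ∈ p.1
  · rw [if_pos hvp]
    intro hcontra
    have h1 : p.1.erase v = p.1 := congrArg Prod.fst hcontra
    rw [← h1] at hvp
    exact Finset.notMem_erase v p.1 hvp
  · rw [if_neg hvp]
    intro hcontra
    have h1 : insert v p.1 = p.1 := congrArg Prod.fst hcontra
    apply hvp
    rw [← h1]
    exact Finset.mem_insert_self v p.1

lemma qflip_weight {N n : ℕ} (hn : 1 ≤ n) {p : Finset (Fin N) × Multiset (Fin N)}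
    (hp : p ∈ idxSet N n) :
    (-1 : MvPolynomial (Fin N) ℤ)^(p.1.card) * (∏ j ∈ p.1, X j) * (p.2.map X).prod
      + (-1)^((qflip N p).1.card) * (∏ j ∈ (qflip N p).1, X j)
        * ((qflip N p).2.map X).prod = 0 := by
  have h := nonempty_of_mem hn hp
  rw [qflip, dif_pos h]
  set v := (p.1.1 + p.2).toFinset.min' h with hv
  have hvc : v ∈ p.1.1 + p.2 := Multiset.mem_toFinset.mp (Finset.min'_mem _ h)
  by_cases hvp : v ∈ p.1
  · rw [if_pos hvp]
    simp only []
    obtain ⟨c, hc⟩ : ∃ c, p.1.card = c + 1 :=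
      ⟨p.1.card - 1, (Nat.succ_pred_eq_of_pos (Finset.card_pos.mpr ⟨v, hvp⟩)).symm⟩
    rw [Finset.card_erase_of_mem hvp, hc, Nat.add_sub_cancel]
    rw [← Finset.mul_prod_erase p.1 X hvp, Multiset.map_cons, Multiset.prod_cons, pow_succ]
    ring
  · rw [if_neg hvp]
    simp only []
    have hvm : v ∈ p.2 := by
      rcases Multiset.mem_add.mp hvc with h' | h'
      · exact absurd (Finset.mem_def.mpr h') hvp
      · exact h'
    rw [Finset.card_insert_of_notMem hvp, Finset.prod_insert hvp]
    have hprod : (p.2.map X).prod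
        = X v * ((p.2.erase v).map (X : Fin N → MvPolynomial (Fin N) ℤ)).prod := by
      conv_lhs => rw [← Multiset.cons_erase hvm]
      rw [Multiset.map_cons, Multiset.prod_cons]
    rw [hprod, pow_succ]
    ring

lemma alt_sum_zero (N n : ℕ) (hn : 1 ≤ n) :
    ∑ p ∈ idxSet N n,
      (-1 : MvPolynomial (Fin N) ℤ)^(p.1.card) * (∏ j ∈ p.1, X j) * (p.2.map X).prod = 0 :=
  Finset.sum_involution (fun p _ => qflip N p)
    (fun p hp => qflip_weight hn hp)
    (fun p hp _ => qflip_ne hn hp)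
    (fun p hp => qflip_mem hn hp)
    (fun p hp => qflip_flip p (nonempty_of_mem hn hp))

lemma sum_idx_eq (N n : ℕ) :
    ∑ p ∈ idxSet N n,
        (-1 : MvPolynomial (Fin N) ℤ)^(p.1.card) * (∏ j ∈ p.1, X j) * (p.2.map X).prod
      = ∑ i ∈ range (n+1),
        (-1 : MvPolynomial (Fin N) ℤ)^i * esymm (Fin N) ℤ i * hsymm (Fin N) ℤ (n-i) := by
  have hdisj : ((range (n+1) : Finset ℕ) : Set ℕ).PairwiseDisjoint
      (fun i => (powersetCard i (univ : Finset (Fin N))) ×ˢ msets N (n - i)) := by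
    intro i _ j _ hij
    simp only [Function.onFun]
    rw [Finset.disjoint_left]
    rintro p hpi hpj
    rw [mem_product, mem_powersetCard] at hpi hpj
    exact hij (hpi.1.2.symm.trans hpj.1.2)
  rw [idxSet, Finset.sum_biUnion hdisj]
  refine sum_congr rfl fun i hi => ?_
  rw [Finset.sum_product, esymm, hsymm_eq_sum_msets, mul_assoc, Finset.sum_mul_sum,
    Finset.mul_sum]
  refine sum_congr rfl fun S hS => ?_
  rw [Finset.mul_sum]
  refine sum_congr rfl fun m hm => ?_
  rw [(mem_powersetCard.mp hS).2, mul_assoc]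

lemma esymm_hsymm_alt (N n : ℕ) (hn : 1 ≤ n) :
    ∑ i ∈ range (n+1),
      (-1 : MvPolynomial (Fin N) ℤ)^i * esymm (Fin N) ℤ i * hsymm (Fin N) ℤ (n-i) = 0 := by
  rw [← sum_idx_eq]
  exact alt_sum_zero N n hn

noncomputable def ES (N : ℕ) : PowerSeries (MvPolynomial (Fin N) ℤ) :=
  PowerSeries.mk (fun i => esymm (Fin N) ℤ i)
noncomputable def HS (N : ℕ) : PowerSeries (MvPolynomial (Fin N) ℤ) :=
  PowerSeries.mk (fun j => hsymm (Fin N) ℤ j)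
noncomputable def ESn (N : ℕ) : PowerSeries (MvPolynomial (Fin N) ℤ) :=
  PowerSeries.mk (fun i => (-1 : MvPolynomial (Fin N) ℤ)^i * esymm (Fin N) ℤ i)
noncomputable def HSn (N : ℕ) : PowerSeries (MvPolynomial (Fin N) ℤ) :=
  PowerSeries.mk (fun j => (-1 : MvPolynomial (Fin N) ℤ)^j * hsymm (Fin N) ℤ j)

lemma neg_one_pow_sub {R : Type*} [CommRing R] {k n : ℕ} (hk : k ≤ n) :
    ((-1 : R))^(n-k) = (-1)^n * (-1)^k := by
  have h1 : n + k = (n - k) + 2*k := by omega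
  have h2 : ((-1:R))^n * (-1)^k = (-1)^(n+k) := (pow_add _ _ _).symm
  rw [h2, h1, pow_add, pow_mul]
  norm_num

lemma ESn_mul_HS (N : ℕ) : ESn N * HS N = 1 := by
  refine PowerSeries.ext fun n => ?_
  rw [PowerSeries.coeff_mul, Finset.Nat.sum_antidiagonal_eq_sum_range_succ_mk]
  simp only [ESn, HS, PowerSeries.coeff_mk, PowerSeries.coeff_one]
  rcases Nat.eq_zero_or_pos n with rfl | hn
  · simp
  · rw [if_neg (by omega)]
    have := esymm_hsymm_alt N n hn
    simpa [mul_assoc] using this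

lemma ES_mul_HSn (N : ℕ) : ES N * HSn N = 1 := by
  refine PowerSeries.ext fun n => ?_
  rw [PowerSeries.coeff_mul, Finset.Nat.sum_antidiagonal_eq_sum_range_succ_mk]
  simp only [ES, HSn, PowerSeries.coeff_mk, PowerSeries.coeff_one]
  rcases Nat.eq_zero_or_pos n with rfl | hn
  · simp
  · rw [if_neg (by omega)]
    have h0 := esymm_hsymm_alt N n hn
    calc ∑ k ∈ range (n+1), esymm (Fin N) ℤ k * ((-1)^(n-k) * hsymm (Fin N) ℤ (n-k))
        = (-1)^n * ∑ k ∈ range (n+1),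
            (-1 : MvPolynomial (Fin N) ℤ)^k * esymm (Fin N) ℤ k * hsymm (Fin N) ℤ (n-k) := by
          rw [Finset.mul_sum]
          refine sum_congr rfl fun k hk => ?_
          rw [neg_one_pow_sub (by simpa using Nat.lt_succ_iff.mp (mem_range.mp hk))]
          ring
      _ = 0 := by rw [h0, mul_zero]

lemma coeff_ES_mul_HS (N n : ℕ) :
    PowerSeries.coeff n (ES N * HS N) = qPoly N n := by
  rw [PowerSeries.coeff_mul, Finset.Nat.sum_antidiagonal_eq_sum_range_succ_mk, qPoly]
  simp only [ES, HS, PowerSeries.coeff_mk]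

lemma coeff_ESn_mul_HSn (N n : ℕ) :
    PowerSeries.coeff n (ESn N * HSn N) = (-1)^n * qPoly N n := by
  rw [PowerSeries.coeff_mul, Finset.Nat.sum_antidiagonal_eq_sum_range_succ_mk, qPoly,
    Finset.mul_sum]
  simp only [ESn, HSn, PowerSeries.coeff_mk]
  refine sum_congr rfl fun k hk => ?_
  rw [neg_one_pow_sub (by simpa using Nat.lt_succ_iff.mp (mem_range.mp hk))]
  have hsq : ((-1 : MvPolynomial (Fin N) ℤ))^k * (-1)^k = 1 := by
    rw [← pow_add]
    exact Even.neg_one_pow ⟨k, rfl⟩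
  calc (-1)^k * esymm (Fin N) ℤ k * ((-1)^n * (-1)^k * hsymm (Fin N) ℤ (n-k))
      = ((-1)^k * (-1)^k) * ((-1)^n * (esymm (Fin N) ℤ k * hsymm (Fin N) ℤ (n-k))) := by ring
    _ = (-1)^n * (esymm (Fin N) ℤ k * hsymm (Fin N) ℤ (n-k)) := by rw [hsq, one_mul]

lemma qPoly_conv_zero (N n : ℕ) (hn : 1 ≤ n) :
    ∑ k ∈ range (n+1),
      qPoly N k * ((-1 : MvPolynomial (Fin N) ℤ)^(n-k) * qPoly N (n-k)) = 0 := by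
  have hprod : (ES N * HS N) * (ESn N * HSn N) = 1 := by
    have h1 := ESn_mul_HS N
    have h2 := ES_mul_HSn N
    calc (ES N * HS N) * (ESn N * HSn N) = (ESn N * HS N) * (ES N * HSn N) := by ring
      _ = 1 := by rw [h1, h2, one_mul]
  have := congrArg (PowerSeries.coeff n) hprod
  rw [PowerSeries.coeff_mul, Finset.Nat.sum_antidiagonal_eq_sum_range_succ_mk,
    PowerSeries.coeff_one, if_neg (by omega)] at this
  calc ∑ k ∈ range (n+1), qPoly N k * ((-1 : MvPolynomial (Fin N) ℤ)^(n-k) * qPoly N (n-k))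
      = ∑ k ∈ range (n+1), PowerSeries.coeff k (ES N * HS N)
          * PowerSeries.coeff (n-k) (ESn N * HSn N) := by
        refine sum_congr rfl fun k hk => ?_
        rw [coeff_ES_mul_HS, coeff_ESn_mul_HSn]
    _ = 0 := this

theorem qPoly_relations (N r : ℕ) (hr : 1 ≤ r) :
    qPoly N r ^ 2 +
      2 * ∑ i ∈ Finset.Icc 1 r,
        (-1 : MvPolynomial (Fin N) ℤ) ^ i * qPoly N (r + i) * qPoly N (r - i) = 0 := by
  set R := MvPolynomial (Fin N) ℤ
  set f : ℕ → R := fun k => qPoly N k * ((-1 : R)^(2*r-k) * qPoly N (2*r-k)) with hf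
  have hS : ∑ k ∈ range (2*r+1), f k = 0 := qPoly_conv_zero N (2*r) (by omega)
  have h1 : ∑ k ∈ range (2*r+1), f k
      = ∑ j ∈ range r, f (r-1-j) + (∑ j ∈ range r, f (r+(j+1)) + f (r+0)) := by
    rw [range_eq_Ico, ← Finset.sum_Ico_consecutive f (Nat.zero_le r) (by omega : r ≤ 2*r+1)]
    refine congrArg₂ (· + ·) ?_ ?_
    · rw [← Finset.range_eq_Ico, ← Finset.sum_range_reflect]
    · rw [Finset.sum_Ico_eq_sum_range, show 2*r+1-r = r+1 by omega, Finset.sum_range_succ',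
        Finset.range_eq_Ico]
  have h2 : ∀ j ∈ range r, f (r-1-j) + f (r+(j+1))
      = 2 * ((-1:R)^r * ((-1:R)^(1+j) * qPoly N (r+(1+j)) * qPoly N (r-(1+j)))) := by
    intro j hj
    have hjr : j < r := mem_range.mp hj
    have e1 : r-1-j = r-(1+j) := by omega
    have e2 : 2*r-(r-(1+j)) = r+(1+j) := by omega
    have e3 : 2*r-(r+(1+j)) = r-(1+j) := by omega
    have e4 : r+(j+1) = r+(1+j) := by omega
    rw [hf]
    simp only [e1, e4]
    simp only [e2, e3]
    rw [neg_one_pow_sub (show 1+j ≤ r by omega), pow_add]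
    ring
  have h3 : f (r+0) = (-1:R)^r * qPoly N r^2 := by
    rw [hf]
    simp only [Nat.add_zero, show 2*r-r = r by omega]
    ring
  have h4 : ∑ i ∈ Finset.Icc 1 r, (-1 : R)^i * qPoly N (r+i) * qPoly N (r-i)
      = ∑ j ∈ range r, (-1:R)^(1+j) * qPoly N (r+(1+j)) * qPoly N (r-(1+j)) := by
    rw [← Finset.Ico_add_one_right_eq_Icc, Finset.sum_Ico_eq_sum_range,
      show r+1-1 = r by omega]
  have key : (-1:R)^r * (qPoly N r^2
      + 2 * ∑ i ∈ Finset.Icc 1 r, (-1 : R)^i * qPoly N (r+i) * qPoly N (r-i)) = 0 := by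
    rw [h4]
    rw [h1] at hS
    rw [← add_assoc, ← Finset.sum_add_distrib, Finset.sum_congr rfl h2] at hS
    rw [h3] at hS
    rw [← hS, ← Finset.mul_sum, ← Finset.mul_sum]
    ring
  have hsq : (-1:R)^r * (-1:R)^r = 1 := by
    rw [← pow_add]
    exact Even.neg_one_pow ⟨r, rfl⟩
  calc qPoly N r ^ 2 + 2 * ∑ i ∈ Finset.Icc 1 r,
        (-1 : R)^i * qPoly N (r+i) * qPoly N (r-i)
      = ((-1:R)^r * (-1:R)^r) * (qPoly N r ^ 2 + 2 * ∑ i ∈ Finset.Icc 1 r,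
          (-1 : R)^i * qPoly N (r+i) * qPoly N (r-i)) := by rw [hsq, one_mul]
    _ = (-1:R)^r * ((-1:R)^r * (qPoly N r ^ 2 + 2 * ∑ i ∈ Finset.Icc 1 r,
          (-1 : R)^i * qPoly N (r+i) * qPoly N (r-i))) := by ring
    _ = (-1:R)^r * 0 := by rw [key]
    _ = 0 := mul_zero _
end

section
/- Let R be a commutative ring, let n ≥ 2, and let 𝒲_n(R) be the nilCoxeter algebra of the hyperoctahedral group over R, generated by u_0, u_1, …, u_{n−1}. For t ∈ R define C(t) := (1 + t u_{n−1}) ⋯ (1 + t u_1)(1 + t u_0)(1 + t u_0)(1 + t u_1) ⋯ (1 + t u_{n−1}). Then for all s, t ∈ R one has C(s) · C(t) = C(t) · C(s). -/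
/-- The defining relations of the nilCoxeter algebra of the hyperoctahedral
group `W_n`, on generators `u_0, …, u_{n−1}` (indexed by `Fin n`):
`u_i² = 0`; `u_i u_j = u_j u_i` for `|i − j| ≥ 2`; the braid relation
`u_i u_{i+1} u_i = u_{i+1} u_i u_{i+1}` for `i > 0`; and
`u_0 u_1 u_0 u_1 = u_1 u_0 u_1 u_0`. -/
inductive NilCoxRel (R : Type*) [CommRing R] (n : ℕ) :
    FreeAlgebra R (Fin n) → FreeAlgebra R (Fin n) → Prop
  | sq (i : Fin n) : NilCoxRel R n (FreeAlgebra.ι R i * FreeAlgebra.ι R i) 0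
  | comm (i j : Fin n) (h : (i : ℕ) + 2 ≤ (j : ℕ)) :
      NilCoxRel R n (FreeAlgebra.ι R i * FreeAlgebra.ι R j)
        (FreeAlgebra.ι R j * FreeAlgebra.ι R i)
  | braid (i j : Fin n) (h1 : 1 ≤ (i : ℕ)) (h2 : (j : ℕ) = (i : ℕ) + 1) :
      NilCoxRel R n
        (FreeAlgebra.ι R i * FreeAlgebra.ι R j * FreeAlgebra.ι R i)
        (FreeAlgebra.ι R j * FreeAlgebra.ι R i * FreeAlgebra.ι R j)
  | braid0 (i j : Fin n) (h1 : (i : ℕ) = 0) (h2 : (j : ℕ) = 1) :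
      NilCoxRel R n
        (FreeAlgebra.ι R i * FreeAlgebra.ι R j * FreeAlgebra.ι R i * FreeAlgebra.ι R j)
        (FreeAlgebra.ι R j * FreeAlgebra.ι R i * FreeAlgebra.ι R j * FreeAlgebra.ι R i)

/-- The nilCoxeter algebra `𝒲_n(R)` of the hyperoctahedral group. -/
abbrev NilCoxeter (R : Type*) [CommRing R] (n : ℕ) := RingQuot (NilCoxRel R n)

/-- The generator `u_i` of the nilCoxeter algebra. -/
noncomputable def uGen (R : Type*) [CommRing R] (n : ℕ) (i : Fin n) : NilCoxeter R n :=
  RingQuot.mkAlgHom R (NilCoxRel R n) (FreeAlgebra.ι R i)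

/-- `C(t) = (1 + t u_{n−1}) ⋯ (1 + t u_1)(1 + t u_0)(1 + t u_0)(1 + t u_1) ⋯
(1 + t u_{n−1})`. -/
noncomputable def Cfun (R : Type*) [CommRing R] (n : ℕ) (t : R) : NilCoxeter R n :=
  (((List.finRange n).reverse).map (fun i => 1 + t • uGen R n i)).prod *
    ((List.finRange n).map (fun i => 1 + t • uGen R n i)).prod

section abstractLemmas
variable {R : Type*} [CommRing R] {A : Type*} [Ring A] [Algebra R A]

private lemma hh (x : A) (hx : x * x = 0) (s t : R) :
    (1 + s • x) * (1 + t • x) = 1 + (s + t) • x := by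
  simp only [mul_add, add_mul, one_mul, mul_one, smul_mul_assoc, mul_smul_comm, smul_smul,
    hx, smul_zero, add_zero, add_smul]
  abel

private lemma commHH (x y : A) (h : x * y = y * x) (a b : R) :
    (1 + a • x) * (1 + b • y) = (1 + b • y) * (1 + a • x) := by
  simp only [mul_add, add_mul, one_mul, mul_one, smul_mul_assoc, mul_smul_comm, smul_smul, h]
  module

private lemma ybe (x y : A) (hx : x * x = 0) (hy : y * y = 0)
    (hb : x * (y * x) = y * (x * y)) (a b : R) :
    (1 + a • x) * ((1 + (a + b) • y) * (1 + b • x))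
      = (1 + b • y) * ((1 + (a + b) • x) * (1 + a • y)) := by
  have hx' : ∀ z : A, x * (x * z) = 0 := fun z => by rw [← mul_assoc, hx, zero_mul]
  have hy' : ∀ z : A, y * (y * z) = 0 := fun z => by rw [← mul_assoc, hy, zero_mul]
  simp only [mul_add, add_mul, one_mul, mul_one, smul_mul_assoc, mul_smul_comm, smul_smul,
    mul_assoc, hx, hy, hx', hy', hb, smul_zero, mul_zero, add_zero, zero_add]
  module

private lemma Asym (x y : A) (hx : x * x = 0) (hy : y * y = 0)
    (hb : x * (y * x) = y * (x * y)) (s t : R) :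
    (1 + s • y) * ((1 + s • x) * ((1 + t • y) * (1 + (-s) • x)))
      = (1 + t • y) * ((1 + t • x) * ((1 + s • y) * (1 + (-t) • x))) := by
  have hx' : ∀ z : A, x * (x * z) = 0 := fun z => by rw [← mul_assoc, hx, zero_mul]
  have hy' : ∀ z : A, y * (y * z) = 0 := fun z => by rw [← mul_assoc, hy, zero_mul]
  have hb' : ∀ z : A, x * (y * (x * z)) = y * (x * (y * z)) := fun z => by
    rw [show x * (y * (x * z)) = (x * (y * x)) * z by noncomm_ring,
        show y * (x * (y * z)) = (y * (x * y)) * z by noncomm_ring, hb]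
  simp only [mul_add, add_mul, one_mul, mul_one, smul_mul_assoc, mul_smul_comm, smul_smul,
    mul_assoc, hx, hy, hx', hy', hb, hb', smul_zero, mul_zero, add_zero, zero_add]
  module

private lemma Bsym (x y : A) (hx : x * x = 0) (hy : y * y = 0)
    (hb : x * (y * x) = y * (x * y)) (s t : R) :
    (1 + (-t) • x) * ((1 + s • y) * ((1 + t • x) * (1 + t • y)))
      = (1 + (-s) • x) * ((1 + t • y) * ((1 + s • x) * (1 + s • y))) := by
  have hx' : ∀ z : A, x * (x * z) = 0 := fun z => by rw [← mul_assoc, hx, zero_mul]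
  have hy' : ∀ z : A, y * (y * z) = 0 := fun z => by rw [← mul_assoc, hy, zero_mul]
  have hb' : ∀ z : A, x * (y * (x * z)) = y * (x * (y * z)) := fun z => by
    rw [show x * (y * (x * z)) = (x * (y * x)) * z by noncomm_ring,
        show y * (x * (y * z)) = (y * (x * y)) * z by noncomm_ring, hb]
  simp only [mul_add, add_mul, one_mul, mul_one, smul_mul_assoc, mul_smul_comm, smul_smul,
    mul_assoc, hx, hy, hx', hy', hb, hb', smul_zero, mul_zero, add_zero, zero_add]
  module

private lemma baseSym (x y : A) (hx : x * x = 0) (hy : y * y = 0)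
    (hb : x * (y * (x * y)) = y * (x * (y * x))) (s t : R) :
    (1 + s • y) * ((1 + (s + s) • x) * ((1 + (s + t) • y) * ((1 + (t + t) • x) * (1 + t • y))))
      = (1 + t • y) * ((1 + (t + t) • x) * ((1 + (t + s) • y) *
          ((1 + (s + s) • x) * (1 + s • y)))) := by
  have hx' : ∀ z : A, x * (x * z) = 0 := fun z => by rw [← mul_assoc, hx, zero_mul]
  have hy' : ∀ z : A, y * (y * z) = 0 := fun z => by rw [← mul_assoc, hy, zero_mul]
  have hb' : ∀ z : A, x * (y * (x * (y * z))) = y * (x * (y * (x * z))) := fun z => by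
    rw [show x * (y * (x * (y * z))) = (x * (y * (x * y))) * z by noncomm_ring,
        show y * (x * (y * (x * z))) = (y * (x * (y * x))) * z by noncomm_ring, hb]
  simp only [mul_add, add_mul, one_mul, mul_one, smul_mul_assoc, mul_smul_comm, smul_smul,
    mul_assoc, hx, hy, hx', hy', hb, hb', smul_zero, mul_zero, add_zero, zero_add]
  module

end abstractLemmas

theorem List.map_coe_finRange (n : ℕ) : (List.finRange n).map (Fin.val) = List.range n :=
  List.ext_getElem (by simp) (by simp)

section Main
variable (R : Type*) [CommRing R] (n : ℕ)

noncomputable def uN (k : ℕ) : NilCoxeter R n :=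
  if h : k < n then uGen R n ⟨k, h⟩ else 0

lemma uN_sq (k : ℕ) : uN R n k * uN R n k = 0 := by
  unfold uN
  split
  · have := RingQuot.mkAlgHom_rel R (NilCoxRel.sq (R := R) (n := n) ⟨k, ‹_›⟩)
    simpa [uGen] using this
  · simp

lemma uN_comm {i j : ℕ} (h : i + 2 ≤ j) : uN R n i * uN R n j = uN R n j * uN R n i := by
  unfold uN
  split
  · split
    · have := RingQuot.mkAlgHom_rel R
        (NilCoxRel.comm (R := R) (n := n) ⟨i, by omega⟩ ⟨j, ‹_›⟩ h)
      simpa [uGen] using this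
    · simp
  · split <;> simp

lemma uN_braid {i : ℕ} (hi : 1 ≤ i) :
    uN R n i * (uN R n (i+1) * uN R n i) = uN R n (i+1) * (uN R n i * uN R n (i+1)) := by
  by_cases h : i + 1 < n
  · have := RingQuot.mkAlgHom_rel R
      (NilCoxRel.braid (R := R) (n := n) ⟨i, by omega⟩ ⟨i+1, h⟩ hi rfl)
    simp only [map_mul] at this
    simp only [uN, dif_pos h, dif_pos (show i < n by omega), uGen]
    rw [← mul_assoc, ← mul_assoc, this]
  · simp only [uN, dif_neg h]
    simp

lemma uN_braid0 (hn : 2 ≤ n) :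
    uN R n 0 * (uN R n 1 * (uN R n 0 * uN R n 1))
      = uN R n 1 * (uN R n 0 * (uN R n 1 * uN R n 0)) := by
  have h0 : (0:ℕ) < n := by omega
  have h1 : (1:ℕ) < n := by omega
  have := RingQuot.mkAlgHom_rel R
    (NilCoxRel.braid0 (R := R) (n := n) ⟨0, h0⟩ ⟨1, h1⟩ rfl rfl)
  simp only [map_mul] at this
  simp only [uN, dif_pos h0, dif_pos h1, uGen]
  rw [show ∀ a b : NilCoxeter R n, a * (b * (a * b)) = a * b * a * b by intros; noncomm_ring,
      show ∀ a b : NilCoxeter R n, b * (a * (b * a)) = b * a * b * a by intros; noncomm_ring,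
      this]

noncomputable def hN (k : ℕ) (t : R) : NilCoxeter R n := 1 + t • uN R n k

noncomputable def CkN : ℕ → R → NilCoxeter R n
  | 0, _ => 1
  | (k+1), t => hN R n k t * (CkN k t * hN R n k t)

lemma CkN_succ (k : ℕ) (t : R) :
    CkN R n (k+1) t = hN R n k t * (CkN R n k t * hN R n k t) := rfl

lemma hN_mul (k : ℕ) (s t : R) : hN R n k s * hN R n k t = hN R n k (s+t) :=
  hh _ (uN_sq R n k) s t

lemma hN_mul' (k : ℕ) (s t : R) (z : NilCoxeter R n) :
    hN R n k s * (hN R n k t * z) = hN R n k (s+t) * z := by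
  rw [← mul_assoc, hN_mul]

lemma hN_zero (k : ℕ) : hN R n k 0 = 1 := by simp [hN]

lemma hN_cancel (k : ℕ) (a : R) (z : NilCoxeter R n) :
    hN R n k a * (hN R n k (-a) * z) = z := by
  rw [hN_mul', add_neg_cancel, hN_zero, one_mul]

lemma hN_cancel' (k : ℕ) (a : R) (z : NilCoxeter R n) :
    hN R n k (-a) * (hN R n k a * z) = z := by
  rw [hN_mul', neg_add_cancel, hN_zero, one_mul]

lemma hN_comm {i j : ℕ} (h : i + 2 ≤ j) (a b : R) :
    hN R n j a * hN R n i b = hN R n i b * hN R n j a := by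
  unfold hN
  exact commHH _ _ (uN_comm R n h).symm a b

lemma hN_CkN_comm {j : ℕ} : ∀ (k : ℕ), k + 1 ≤ j → ∀ (a t : R),
    hN R n j a * CkN R n k t = CkN R n k t * hN R n j a := by
  intro k
  induction k with
  | zero => intro _ a t; simp [CkN]
  | succ m ih =>
      intro hj a t
      have hc : hN R n j a * hN R n m t = hN R n m t * hN R n j a :=
        hN_comm R n (by omega) a t
      simp only [CkN]
      rw [← mul_assoc, hc, mul_assoc]
      conv_rhs => rw [mul_assoc]
      congr 1
      rw [← mul_assoc, ih (by omega), mul_assoc, hc, ← mul_assoc]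

lemma hN_comm' {i j : ℕ} (h : i + 2 ≤ j) (a b : R) (z : NilCoxeter R n) :
    hN R n j a * (hN R n i b * z) = hN R n i b * (hN R n j a * z) := by
  rw [← mul_assoc, hN_comm R n h a b, mul_assoc]

lemma hN_CkN_comm' {j k : ℕ} (h : k + 1 ≤ j) (a t : R) (z : NilCoxeter R n) :
    hN R n j a * (CkN R n k t * z) = CkN R n k t * (hN R n j a * z) := by
  rw [← mul_assoc, hN_CkN_comm R n k h a t, mul_assoc]

lemma ybeN {k : ℕ} (hk : 1 ≤ k) (s t : R) (z : NilCoxeter R n) :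
    hN R n k s * (hN R n (k+1) (s+t) * (hN R n k t * z))
      = hN R n (k+1) t * (hN R n k (s+t) * (hN R n (k+1) s * z)) := by
  have h := ybe (uN R n k) (uN R n (k+1)) (uN_sq R n k) (uN_sq R n (k+1))
    (uN_braid R n hk) s t
  rw [show hN R n k s * (hN R n (k+1) (s+t) * (hN R n k t * z))
        = (hN R n k s * (hN R n (k+1) (s+t) * hN R n k t)) * z by noncomm_ring,
      show hN R n (k+1) t * (hN R n k (s+t) * (hN R n (k+1) s * z))
        = (hN R n (k+1) t * (hN R n k (s+t) * hN R n (k+1) s)) * z by noncomm_ring]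
  congr 1

noncomputable def Fel (k : ℕ) (s t : R) : NilCoxeter R n :=
  hN R n k s * (CkN R n k s * (hN R n k (s+t) * (CkN R n k t * hN R n k t)))

lemma Feldecomp (k : ℕ) (s t : R) :
    (hN R n (k+2) s * (hN R n (k+1) s * (hN R n (k+2) t * hN R n (k+1) (-s)))) *
      (Fel R n (k+1) s t *
        (hN R n (k+1) (-t) * (hN R n (k+2) s * (hN R n (k+1) t * hN R n (k+2) t))))
      = Fel R n (k+2) s t := by
  simp only [Fel, CkN_succ, mul_assoc]
  rw [hN_cancel' R n (k+1) s, hN_cancel R n (k+1) t,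
      hN_comm' R n (i := k) (j := k+2) (by omega) t s,
      hN_CkN_comm' R n (j := k+2) (k := k) (by omega) t s,
      hN_comm' R n (i := k) (j := k+2) (by omega) t s,
      ← hN_comm' R n (i := k) (j := k+2) (by omega) s t,
      ← hN_CkN_comm' R n (j := k+2) (k := k) (by omega) s t,
      ← hN_comm' R n (i := k) (j := k+2) (by omega) s t,
      ← ybeN R n (k := k+1) (by omega) s t]

lemma Fsym (hn : 2 ≤ n) : ∀ (k : ℕ) (s t : R), Fel R n k s t = Fel R n k t s := by
  intro k
  induction k with
  | zero =>
      intro s t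
      simp only [Fel, CkN, one_mul]
      rw [hN_mul', hN_mul, hN_mul', hN_mul]
      congr 1
      ring
  | succ k ih =>
      match k, ih with
      | 0, _ =>
          intro s t
          simp only [Fel, CkN, one_mul]
          rw [hN_mul, hN_mul]
          have := baseSym (uN R n 0) (uN R n 1) (uN_sq R n 0) (uN_sq R n 1)
            (uN_braid0 R n hn) s t
          simpa only [hN] using this
      | (m+1), ih =>
          intro s t
          rw [← Feldecomp R n m s t, ← Feldecomp R n m t s, ih s t,
              show hN R n (m+2) s * (hN R n (m+1) s * (hN R n (m+2) t * hN R n (m+1) (-s)))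
                = hN R n (m+2) t * (hN R n (m+1) t * (hN R n (m+2) s * hN R n (m+1) (-t)))
                from Asym (uN R n (m+1)) (uN R n (m+2)) (uN_sq R n (m+1)) (uN_sq R n (m+2))
                  (uN_braid R n (by omega)) s t,
              show hN R n (m+1) (-t) * (hN R n (m+2) s * (hN R n (m+1) t * hN R n (m+2) t))
                = hN R n (m+1) (-s) * (hN R n (m+2) t * (hN R n (m+1) s * hN R n (m+2) s))
                from Bsym (uN R n (m+1)) (uN R n (m+2)) (uN_sq R n (m+1)) (uN_sq R n (m+2))
                  (uN_braid R n (by omega)) s t]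

lemma CkN_mul (m : ℕ) (s t : R) :
    CkN R n (m+1) s * CkN R n (m+1) t = Fel R n m s t := by
  simp only [CkN_succ, Fel, mul_assoc]
  rw [hN_mul' R n m s t]

lemma rangeProd (t : R) : ∀ (m : ℕ),
    ((((List.range m).map (fun j => hN R n j t)).reverse).prod) *
      (((List.range m).map (fun j => hN R n j t)).prod) = CkN R n m t := by
  intro m
  induction m with
  | zero => simp [CkN]
  | succ m ih =>
      rw [List.range_succ, List.map_append, List.reverse_append, List.prod_append,
        List.prod_append]
      simp only [List.map_cons, List.map_nil, List.reverse_cons, List.reverse_nil,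
        List.nil_append, List.prod_cons, List.prod_nil, mul_one, CkN_succ]
      rw [mul_assoc, ← mul_assoc (((List.range m).map (fun j => hN R n j t)).reverse).prod, ih]

lemma Cfun_eq (t : R) : Cfun R n t = CkN R n n t := by
  have hf : (fun i : Fin n => 1 + t • uGen R n i)
      = (fun j : ℕ => hN R n j t) ∘ Fin.val := by
    funext i
    simp only [Function.comp, hN, uN, dif_pos i.isLt, Fin.eta]
  rw [Cfun, hf]
  rw [show ((List.finRange n).reverse.map ((fun j : ℕ => hN R n j t) ∘ Fin.val)).prod
        = (((List.range n).map (fun j : ℕ => hN R n j t)).reverse).prod by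
      rw [← List.map_map, ← List.map_coe_finRange, ← List.map_reverse, ← List.map_reverse,
        List.map_map],
      show ((List.finRange n).map ((fun j : ℕ => hN R n j t) ∘ Fin.val)).prod
        = ((List.range n).map (fun j : ℕ => hN R n j t)).prod by
      rw [← List.map_map, List.map_coe_finRange]]
  exact rangeProd R n t n

end Main

/-- Fomin–Kirillov: `C(s) C(t) = C(t) C(s)` in the nilCoxeter
algebra of the hyperoctahedral group. -/
theorem Cfun_commute (R : Type*) [CommRing R] (n : ℕ) (hn : 2 ≤ n) (s t : R) :
    Cfun R n s * Cfun R n t = Cfun R n t * Cfun R n s := by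
  obtain ⟨m, rfl⟩ : ∃ m, n = m + 1 := ⟨n - 1, by omega⟩
  rw [Cfun_eq, Cfun_eq, CkN_mul, CkN_mul, Fsym R (m+1) hn m s t]
end

section
/- Let R be a commutative ring, let n ≥ 2, and let 𝒲_n(R) be the nilCoxeter algebra of the hyperoctahedral group over R, generated by u_0, u_1, …, u_{n−1}. For t ∈ R define C(t) := (1 + t u_{n−1}) ⋯ (1 + t u_1)(1 + t u_0)(1 + t u_0)(1 + t u_1) ⋯ (1 + t u_{n−1}) and A_1(t) := (1 + t u_{n−1})(1 + t u_{n−2}) ⋯ (1 + t u_1). Then for every y ∈ R, C(y) · A_1(−y) = A_1(y) · (1 + 2y u_0). -/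
/-- `A_1(t) = (1 + t u_{n−1})(1 + t u_{n−2}) ⋯ (1 + t u_1)` (the factor for
`i = 0` is replaced by `1`). -/
noncomputable def A1fun (R : Type*) [CommRing R] (n : ℕ) (t : R) : NilCoxeter R n :=
  (((List.finRange n).reverse).map
    (fun i : Fin n => if (i : ℕ) = 0 then 1 else 1 + t • uGen R n i)).prod

lemma uGen_sq (R : Type*) [CommRing R] (n : ℕ) (i : Fin n) :
    uGen R n i * uGen R n i = 0 := by
  have := RingQuot.mkAlgHom_rel R (NilCoxRel.sq (R := R) i)
  simpa [uGen, map_mul] using this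

lemma gen_inv (R : Type*) [CommRing R] (n : ℕ) (t : R) (i : Fin n) :
    (1 + t • uGen R n i) * (1 + (-t) • uGen R n i) = 1 := by
  have h : (t • uGen R n i) * ((-t) • uGen R n i) = 0 := by
    rw [smul_mul_smul_comm, uGen_sq, smul_zero]
  calc (1 + t • uGen R n i) * (1 + (-t) • uGen R n i)
      = 1 * (1 + (-t) • uGen R n i) + t • uGen R n i * (1 + (-t) • uGen R n i) := by
        rw [add_mul]
    _ = 1 + (-t) • uGen R n i + (t • uGen R n i + 0) := by
        rw [one_mul, mul_add, mul_one, h]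
    _ = 1 := by rw [add_assoc, add_zero, ← add_smul, neg_add_cancel, zero_smul, add_zero]

lemma prod_cancel {α M : Type*} [Monoid M] (f h : α → M) :
    ∀ L : List α, (∀ i ∈ L, f i * h i = 1) →
      (L.map f).prod * (L.reverse.map h).prod = 1
  | [], _ => by simp
  | a :: L, H => by
    have ih := prod_cancel f h L (fun i hi => H i (List.mem_cons_of_mem a hi))
    rw [List.reverse_cons, List.map_cons, List.prod_cons, List.map_append,
      List.prod_append, List.map_cons, List.map_nil, List.prod_cons, List.prod_nil,
      mul_one, mul_assoc, ← mul_assoc ((List.map f L).prod), ih, one_mul,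
      H a List.mem_cons_self]

/-- `C(y) · A_1(−y) = A_1(y) · (1 + 2y u_0)` in the nilCoxeter
algebra of the hyperoctahedral group. -/
theorem Cfun_mul_A1fun_neg (R : Type*) [CommRing R] (n : ℕ) (hn : 2 ≤ n) (y : R) :
    Cfun R n y * A1fun R n (-y) =
      A1fun R n y * (1 + (2 * y) • uGen R n ⟨0, by omega⟩) := by
  obtain ⟨m, rfl⟩ : ∃ m, n = m + 2 := ⟨n - 2, by omega⟩
  have hz : (⟨0, by omega⟩ : Fin (m + 2)) = 0 := rfl
  rw [hz]
  unfold Cfun A1fun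
  rw [List.finRange_succ]
  simp only [List.map_cons, List.reverse_cons, List.map_append, List.prod_append,
    List.prod_cons, List.prod_nil, mul_one, List.map_map, List.map_reverse,
    Function.comp_def, Fin.val_succ, Fin.val_zero, Nat.succ_ne_zero, if_false, if_true]
  simp only [List.map_nil, List.prod_nil, mul_one, one_mul]
  set u0 : NilCoxeter R (m + 2) := uGen R (m + 2) 0 with hu0
  set T := List.finRange (m + 1) with hT
  have hc : (T.map (fun x => 1 + y • uGen R (m + 2) x.succ)).prod *
      ((T.reverse).map (fun x => 1 + (-y) • uGen R (m + 2) x.succ)).prod = 1 :=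
    prod_cancel _ _ T (fun i _ => gen_inv R (m + 2) y i.succ)
  have h0 : (y • u0) * (y • u0) = 0 := by
    rw [smul_mul_smul_comm, hu0, uGen_sq, smul_zero]
  have he : (1 + y • u0) * (1 + y • u0) = 1 + (2 * y) • u0 := by
    calc (1 + y • u0) * (1 + y • u0)
        = 1 * (1 + y • u0) + y • u0 * (1 + y • u0) := by rw [add_mul]
      _ = 1 + y • u0 + (y • u0 + 0) := by rw [one_mul, mul_add, mul_one, h0]
      _ = 1 + (2 * y) • u0 := by rw [add_zero, two_mul, add_smul, add_assoc]
  simp only [← List.map_reverse] at hc ⊢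
  simp only [mul_assoc]
  rw [hc, mul_one, he]
end

section
/- Let ℓ ≥ 1 and work in the field of rational functions ℚ(x_1,…,x_{2ℓ}) (the fraction field of the polynomial ring ℚ[x_1,…,x_{2ℓ}]). Let M be the 2ℓ × 2ℓ skew-symmetric matrix with entries M_{ij} = (x_i − x_j)/(x_i + x_j). Then det(M) = ∏_{1 ≤ i < j ≤ 2ℓ} ((x_i − x_j)/(x_i + x_j))². (This is equivalent to Schur's Pfaffian identity Pf( (x_i − x_j)/(x_i + x_j) ) = ∏_{i<j} (x_i − x_j)/(x_i + x_j), since the determinant of a skew-symmetric matrix of even size is the square of its Pfaffian.) -/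
open Finset Matrix

section Aux

variable {K : Type*} [Field K]

set_option maxHeartbeats 1000000 in
/-- Key pointwise identity, multiplied through by `(a-b)/(a+b)`. -/
lemma schur_entry_identity' (a b u v : K) (hab : a + b ≠ 0) (hau : a + u ≠ 0)
    (hbu : b + u ≠ 0) (hav : a + v ≠ 0) (hbv : b + v ≠ 0) (huv : u + v ≠ 0) :
    (u - a) / (u + a) * ((b - v) / (b + v)) - (u - b) / (u + b) * ((a - v) / (a + v)) +
      (u - v) / (u + v) * ((a - b) / (a + b))
    = ((a - u) / (a + u) * ((b - u) / (b + u))) * ((u - v) / (u + v)) *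
      ((a - v) / (a + v) * ((b - v) / (b + v))) * ((a - b) / (a + b)) := by
  have h1 : u + a ≠ 0 := by rwa [add_comm]
  have h2 : u + b ≠ 0 := by rwa [add_comm]
  field_simp
  ring

/-- Key pointwise identity, in the form appearing in the matrix computation. -/
lemma schur_entry (a b u v : K) (hab : a + b ≠ 0) (hau : a + u ≠ 0)
    (hbu : b + u ≠ 0) (hav : a + v ≠ 0) (hbv : b + v ≠ 0) (huv : u + v ≠ 0)
    (hab' : a - b ≠ 0) :
    (u - a) / (u + a) * ((b - v) / (b + v) / ((a - b) / (a + b))) +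
      (u - b) / (u + b) * (-((a - v) / (a + v) / ((a - b) / (a + b)))) +
      (u - v) / (u + v)
    = ((a - u) / (a + u) * ((b - u) / (b + u))) * ((u - v) / (u + v)) *
      ((a - v) / (a + v) * ((b - v) / (b + v))) := by
  have hp : (a - b) / (a + b) ≠ 0 := div_ne_zero hab' hab
  have h := schur_entry_identity' a b u v hab hau hbu hav hbv huv
  apply mul_right_cancel₀ hp
  rw [add_mul, add_mul, mul_assoc, div_mul_cancel₀ _ hp, mul_assoc, neg_mul,
    div_mul_cancel₀ _ hp]
  linear_combination h

/-- Diagonal entries vanish. -/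
lemma schur_entry_diag (a b u p : K) :
    (u - a) / (u + a) * ((b - u) / (b + u) / p) +
      (u - b) / (u + b) * (-((a - u) / (a + u) / p)) + (u - u) / (u + u) = 0 := by
  rw [show u + a = a + u from add_comm _ _, show u + b = b + u from add_comm _ _,
    show u - a = -(a - u) by ring, show u - b = -(b - u) by ring, sub_self, zero_div]
  ring

/-- Schur's Pfaffian identity, determinant form, over an arbitrary field. -/
lemma schur_det_key : ∀ (l : ℕ) (x : Fin (2 * l) → K),
    (∀ i j, i ≠ j → x i + x j ≠ 0) → Function.Injective x →
    (Matrix.of fun i j : Fin (2 * l) => (x i - x j) / (x i + x j)).det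
      = ∏ i : Fin (2 * l), ∏ j : Fin (2 * l),
          if i < j then ((x i - x j) / (x i + x j)) ^ 2 else 1 := by
  intro l
  induction l with
  | zero =>
    intro x _ _
    haveI : IsEmpty (Fin (2 * 0)) := Fin.isEmpty
    rw [Matrix.det_isEmpty]
    simp
  | succ l ih =>
    intro y hsum hinj
    have hE : 2 + 2 * l = 2 * (l + 1) := by ring
    set e : Fin 2 ⊕ Fin (2 * l) ≃ Fin (2 * (l + 1)) :=
      finSumFinEquiv.trans (finCongr hE) with he
    set x : Fin 2 ⊕ Fin (2 * l) → K := y ∘ e with hxdef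
    have hxy : ∀ i, x i = y (e i) := fun _ => rfl
    have hxsum : ∀ i j, i ≠ j → x i + x j ≠ 0 :=
      fun i j h => hsum _ _ (fun hh => h (e.injective hh))
    have hxinj : Function.Injective x := hinj.comp e.injective
    set a : K := x (Sum.inl 0) with ha
    set b : K := x (Sum.inl 1) with hb
    set z : Fin (2 * l) → K := fun k => x (Sum.inr k) with hzdef
    set p : K := (a - b) / (a + b) with hpdef
    have hab : a + b ≠ 0 := hxsum _ _ (by simp)
    have hab' : a - b ≠ 0 := sub_ne_zero.mpr (fun h => by
      have := hxinj h; simp at this)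
    have hp : p ≠ 0 := div_ne_zero hab' hab
    have hau : ∀ k, a + z k ≠ 0 := fun k => hxsum _ _ (by simp)
    have hbu : ∀ k, b + z k ≠ 0 := fun k => hxsum _ _ (by simp)
    have huv : ∀ (i j : Fin (2 * l)), i ≠ j → z i + z j ≠ 0 :=
      fun i j h => hxsum _ _ (by simp [h])
    have hzinj : Function.Injective z :=
      fun i j h => by have := hxinj h; exact Sum.inr_injective this
    -- blocks
    set A : Matrix (Fin 2) (Fin 2) K :=
      Matrix.of (fun i j => (x (Sum.inl i) - x (Sum.inl j)) / (x (Sum.inl i) + x (Sum.inl j)))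
      with hA
    set Bm : Matrix (Fin 2) (Fin (2 * l)) K :=
      Matrix.of (fun i j => (x (Sum.inl i) - z j) / (x (Sum.inl i) + z j)) with hBm
    set Cm : Matrix (Fin (2 * l)) (Fin 2) K :=
      Matrix.of (fun i j => (z i - x (Sum.inl j)) / (z i + x (Sum.inl j))) with hCm
    set Dm : Matrix (Fin (2 * l)) (Fin (2 * l)) K :=
      Matrix.of (fun i j => (z i - z j) / (z i + z j)) with hDm
    set U : Matrix (Fin 2) (Fin (2 * l)) K :=
      Matrix.of (fun i j => if i = 0 then (b - z j) / (b + z j) / p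
        else -((a - z j) / (a + z j) / p)) with hU
    have hba : (x (Sum.inl 1) - x (Sum.inl 0)) / (x (Sum.inl 1) + x (Sum.inl 0)) = -p := by
      rw [hpdef, show x (Sum.inl 1) - x (Sum.inl 0) = -(a - b) by rw [ha, hb]; ring,
        show x (Sum.inl 1) + x (Sum.inl 0) = a + b by rw [ha, hb]; ring, neg_div]
    have hAU : A * U + Bm = 0 := by
      ext i j
      fin_cases i <;>
        simp only [Matrix.add_apply, Matrix.mul_apply, Fin.sum_univ_two, hA, hBm, hU,
          Matrix.of_apply, Matrix.zero_apply, Fin.mk_zero, Fin.mk_one, Fin.isValue,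
          if_pos, if_neg (one_ne_zero (α := Fin 2))]
      · rw [show x (Sum.inl 0) - x (Sum.inl 0) = 0 from sub_self _, zero_div, zero_mul,
          show (x (Sum.inl 0) - x (Sum.inl 1)) / (x (Sum.inl 0) + x (Sum.inl 1)) = p from rfl,
          mul_neg, mul_comm p, div_mul_cancel₀ _ hp]
        rw [← ha]
        ring
      · rw [show x (Sum.inl 1) - x (Sum.inl 1) = 0 from sub_self _, zero_div, zero_mul, hba,
          neg_mul, mul_comm p, div_mul_cancel₀ _ hp]
        rw [← hb]
        ring
    set c : Fin (2 * l) → K :=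
      fun k => (a - z k) / (a + z k) * ((b - z k) / (b + z k)) with hc
    have hN : Cm * U + Dm = diagonal c * Dm * diagonal c := by
      ext i j
      rw [Matrix.mul_diagonal, Matrix.diagonal_mul]
      simp only [Matrix.add_apply, Matrix.mul_apply, Fin.sum_univ_two, hCm, hU, hDm,
        Matrix.of_apply, if_pos, if_neg (one_ne_zero (α := Fin 2))]
      rw [← ha, ← hb]
      by_cases hij : i = j
      · subst hij
        rw [schur_entry_diag a b (z i) p, sub_self, zero_div, mul_zero, zero_mul]
      · rw [hc]
        exact schur_entry a b (z i) (z j) hab (hau i) (hbu i) (hau j) (hbu j)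
          (huv i j hij) hab'
    have hdetA : A.det = p ^ 2 := by
      rw [Matrix.det_fin_two]
      simp only [hA, Matrix.of_apply]
      rw [hba, show x (Sum.inl 0) - x (Sum.inl 0) = 0 from sub_self _,
        show x (Sum.inl 1) - x (Sum.inl 1) = 0 from sub_self _, zero_div, zero_div,
        show (x (Sum.inl 0) - x (Sum.inl 1)) / (x (Sum.inl 0) + x (Sum.inl 1)) = p from rfl]
      ring
    have hsub : (Matrix.of fun i j : Fin (2 * (l + 1)) =>
        (y i - y j) / (y i + y j)).submatrix e e = fromBlocks A Bm Cm Dm := by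
      ext i j
      cases i <;> cases j <;> rfl
    have hT : (fromBlocks (1 : Matrix (Fin 2) (Fin 2) K) U 0
        (1 : Matrix (Fin (2 * l)) (Fin (2 * l)) K)).det = 1 := by
      rw [Matrix.det_fromBlocks_zero₂₁]
      simp
    have hMT : fromBlocks A Bm Cm Dm * fromBlocks 1 U 0 1
        = fromBlocks A 0 Cm (Cm * U + Dm) := by
      rw [Matrix.fromBlocks_multiply]
      simp only [Matrix.mul_one, Matrix.mul_zero, add_zero, zero_add, Matrix.one_mul]
      rw [hAU]
    have hLHS : (Matrix.of fun i j : Fin (2 * (l + 1)) =>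
        (y i - y j) / (y i + y j)).det
        = p ^ 2 * ((∏ k, c k) * Dm.det * ∏ k, c k) := by
      calc (Matrix.of fun i j : Fin (2 * (l + 1)) => (y i - y j) / (y i + y j)).det
          = ((Matrix.of fun i j : Fin (2 * (l + 1)) =>
              (y i - y j) / (y i + y j)).submatrix e e).det :=
            (Matrix.det_submatrix_equiv_self e _).symm
        _ = (fromBlocks A Bm Cm Dm).det := by rw [hsub]
        _ = (fromBlocks A Bm Cm Dm).det * (fromBlocks 1 U 0 1).det := by
            rw [hT, mul_one]
        _ = (fromBlocks A Bm Cm Dm * fromBlocks 1 U 0 1).det := (Matrix.det_mul _ _).symm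
        _ = (fromBlocks A 0 Cm (Cm * U + Dm)).det := by rw [hMT]
        _ = A.det * (Cm * U + Dm).det := Matrix.det_fromBlocks_zero₁₂ _ _ _
        _ = p ^ 2 * ((∏ k, c k) * Dm.det * ∏ k, c k) := by
            rw [hdetA, hN, Matrix.det_mul, Matrix.det_mul, Matrix.det_diagonal]
    -- products over the index equivalence
    have hvl : ∀ i : Fin 2, ((e (Sum.inl i)) : ℕ) = (i : ℕ) := by
      intro i; simp [he]
    have hvr : ∀ k : Fin (2 * l), ((e (Sum.inr k)) : ℕ) = 2 + (k : ℕ) := by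
      intro k; simp [he]; omega
    have hlt_ll : ∀ i j : Fin 2, (e (Sum.inl i) < e (Sum.inl j)) ↔ i < j := by
      intro i j; rw [Fin.lt_def, Fin.lt_def, hvl, hvl]
    have hlt_lr : ∀ (i : Fin 2) (k : Fin (2 * l)), e (Sum.inl i) < e (Sum.inr k) := by
      intro i k; rw [Fin.lt_def, hvl, hvr]; have := i.isLt; omega
    have hlt_rl : ∀ (k : Fin (2 * l)) (i : Fin 2), ¬ (e (Sum.inr k) < e (Sum.inl i)) := by
      intro k i; rw [Fin.lt_def, hvl, hvr]; have := i.isLt; omega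
    have hlt_rr : ∀ k m : Fin (2 * l), (e (Sum.inr k) < e (Sum.inr m)) ↔ k < m := by
      intro k m; rw [Fin.lt_def, Fin.lt_def, hvr, hvr]; omega
    have hps : (∏ i : Fin (2 * (l + 1)), ∏ j : Fin (2 * (l + 1)),
          if i < j then ((y i - y j) / (y i + y j)) ^ 2 else 1)
        = ∏ i : Fin 2 ⊕ Fin (2 * l), ∏ j : Fin 2 ⊕ Fin (2 * l),
            if e i < e j then ((x i - x j) / (x i + x j)) ^ 2 else 1 := by
      rw [← Equiv.prod_comp e (fun i => ∏ j : Fin (2 * (l + 1)),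
        if i < j then ((y i - y j) / (y i + y j)) ^ 2 else 1)]
      refine Finset.prod_congr rfl fun i _ => ?_
      rw [← Equiv.prod_comp e (fun j =>
        if e i < j then ((y (e i) - y j) / (y (e i) + y j)) ^ 2 else 1)]
      rfl
    have hRHS : (∏ i : Fin (2 * (l + 1)), ∏ j : Fin (2 * (l + 1)),
          if i < j then ((y i - y j) / (y i + y j)) ^ 2 else 1)
        = p ^ 2 * ((∏ k, ((a - z k) / (a + z k)) ^ 2) * (∏ k, ((b - z k) / (b + z k)) ^ 2)
            * ∏ i : Fin (2 * l), ∏ j : Fin (2 * l),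
                if i < j then ((z i - z j) / (z i + z j)) ^ 2 else 1) := by
      rw [hps]
      simp only [Fintype.prod_sum_type]
      simp only [hlt_lr, hlt_rl, if_true, if_false]
      simp only [hlt_ll, hlt_rr]
      rw [Fin.prod_univ_two (f := fun i => (∏ j : Fin 2,
          if i < j then ((x (Sum.inl i) - x (Sum.inl j)) / (x (Sum.inl i) + x (Sum.inl j))) ^ 2
          else 1) * ∏ k, ((x (Sum.inl i) - z k) / (x (Sum.inl i) + z k)) ^ 2)]
      rw [Fin.prod_univ_two, Fin.prod_univ_two]
      rw [if_neg (lt_irrefl (0 : Fin 2)), if_pos (show (0:Fin 2) < 1 by decide),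
        if_neg (show ¬ (1:Fin 2) < 0 by decide), if_neg (lt_irrefl (1 : Fin 2))]
      rw [← ha, ← hb, show (a - b) / (a + b) = p from rfl]
      simp only [Finset.prod_const_one, one_mul, mul_one]
      ring
    have hcc : (∏ k, c k) * (∏ k, c k)
        = (∏ k, ((a - z k) / (a + z k)) ^ 2) * (∏ k, ((b - z k) / (b + z k)) ^ 2) := by
      rw [← Finset.prod_mul_distrib, ← Finset.prod_mul_distrib]
      refine Finset.prod_congr rfl fun k _ => ?_
      rw [hc]; ring
    rw [hLHS, hRHS, ih z huv hzinj, ← hcc]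
    ring
end Aux

open Finset

set_option maxHeartbeats 2000000 in
/-- Schur's Pfaffian identity, determinant form: in the field
of rational functions `ℚ(x_1,…,x_{2ℓ})`, the skew-symmetric matrix with
entries `(x_i − x_j)/(x_i + x_j)` has determinant
`∏_{i<j} ((x_i − x_j)/(x_i + x_j))²`. -/
theorem schur_pfaffian_det (l : ℕ) (hl : 1 ≤ l) :
    Matrix.det (Matrix.of fun i j : Fin (2 * l) =>
      ((algebraMap (MvPolynomial (Fin (2 * l)) ℚ)
          (FractionRing (MvPolynomial (Fin (2 * l)) ℚ)) (MvPolynomial.X i) -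
        algebraMap (MvPolynomial (Fin (2 * l)) ℚ)
          (FractionRing (MvPolynomial (Fin (2 * l)) ℚ)) (MvPolynomial.X j)) /
       (algebraMap (MvPolynomial (Fin (2 * l)) ℚ)
          (FractionRing (MvPolynomial (Fin (2 * l)) ℚ)) (MvPolynomial.X i) +
        algebraMap (MvPolynomial (Fin (2 * l)) ℚ)
          (FractionRing (MvPolynomial (Fin (2 * l)) ℚ)) (MvPolynomial.X j)))) =
    ∏ p ∈ Finset.univ.filter (fun p : Fin (2 * l) × Fin (2 * l) => p.1 < p.2),
      ((algebraMap (MvPolynomial (Fin (2 * l)) ℚ)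
          (FractionRing (MvPolynomial (Fin (2 * l)) ℚ)) (MvPolynomial.X p.1) -
        algebraMap (MvPolynomial (Fin (2 * l)) ℚ)
          (FractionRing (MvPolynomial (Fin (2 * l)) ℚ)) (MvPolynomial.X p.2)) /
       (algebraMap (MvPolynomial (Fin (2 * l)) ℚ)
          (FractionRing (MvPolynomial (Fin (2 * l)) ℚ)) (MvPolynomial.X p.1) +
        algebraMap (MvPolynomial (Fin (2 * l)) ℚ)
          (FractionRing (MvPolynomial (Fin (2 * l)) ℚ)) (MvPolynomial.X p.2))) ^ 2 := by
  set R := MvPolynomial (Fin (2 * l)) ℚ with hR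
  set F := FractionRing R with hF
  set φ := algebraMap R F with hphi
  have hφ : Function.Injective φ := IsFractionRing.injective R F
  have hXsum : ∀ i j : Fin (2 * l), i ≠ j → (MvPolynomial.X i : R) + MvPolynomial.X j ≠ 0 := by
    intro i j hij h0
    have := congrArg (MvPolynomial.coeff (Finsupp.single i 1)) h0
    simp [MvPolynomial.coeff_X', Finsupp.single_eq_single_iff, Ne.symm hij] at this
  have hsum : ∀ i j : Fin (2 * l), i ≠ j → φ (MvPolynomial.X i) + φ (MvPolynomial.X j) ≠ 0 := by
    intro i j hij h0
    rw [← map_add] at h0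
    exact hXsum i j hij ((map_eq_zero_iff φ hφ).mp h0)
  have hinj : Function.Injective (fun i : Fin (2 * l) => φ (MvPolynomial.X i)) :=
    hφ.comp (MvPolynomial.X_injective)
  have key := schur_det_key l (fun i => φ (MvPolynomial.X i)) hsum hinj
  rw [Finset.prod_filter, ← Finset.univ_product_univ, Finset.prod_product]
  exact key
end
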